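/- (Algebraic/pointwise form of the paper's Theorem 1.1(1).) Let V = ℝ^m carry a nondegenerate symmetric bilinear form ⟨·,·⟩ of signature (p,q), and let A be an algebraic curvature tensor on V. Suppose (r,s) is admissible and the characteristic polynomial of the higher order Jacobi operator J(π) is the same for all π ∈ Gr_{r,s}(V). Then for every admissible pair (r̄,s̄) with r̄+s̄ = r+s or r̄+s̄ = m−(r+s), the characteristic polynomial of J(π) is the same for all π ∈ Gr_{r̄,s̄}(V); i.e. if A is Osserman of type (r,s), then A is Osserman of type (r̄,s̄). -/

import Mathlib

/-- `π` is a nondegenerate subspace of signature `(r,s)` for the symmetric bilinear form `g`: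
`g` restricted to `π` is nondegenerate, the maximal dimension of a negative definite subspace
of `π` is `r`, and the maximal dimension of a positive definite subspace of `π` is `s`. -/
def HasSignature {V : Type*} [AddCommGroup V] [Module ℝ V] (g : V → V → ℝ)
    (π : Submodule ℝ V) (r s : ℕ) : Prop :=
  (∀ z ∈ π, (∀ w ∈ π, g z w = 0) → z = 0) ∧
  (∃ W : Submodule ℝ V, W ≤ π ∧ Module.finrank ℝ W = r ∧ ∀ z ∈ W, z ≠ 0 → g z z < 0) ∧
  (∀ W : Submodule ℝ V, W ≤ π → (∀ z ∈ W, z ≠ 0 → g z z < 0) → Module.finrank ℝ W ≤ r) ∧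
  (∃ W : Submodule ℝ V, W ≤ π ∧ Module.finrank ℝ W = s ∧ ∀ z ∈ W, z ≠ 0 → 0 < g z z) ∧
  (∀ W : Submodule ℝ V, W ≤ π → (∀ z ∈ W, z ≠ 0 → 0 < g z z) → Module.finrank ℝ W ≤ s)

/-- `e` is a `g`-orthonormal basis of `π` with signs `ε i = g(e i, e i) = ±1`. -/
def IsOrthoBasis {V : Type*} [AddCommGroup V] [Module ℝ V] (g : V → V → ℝ)
    (π : Submodule ℝ V) {n : ℕ} (e : Fin n → V) (ε : Fin n → ℝ) : Prop :=
  Submodule.span ℝ (Set.range e) = π ∧ (∀ i, ε i = 1 ∨ ε i = -1) ∧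
    ∀ i j, g (e i) (e j) = if i = j then ε i else 0

open Polynomial Finset Module
open scoped Classical
set_option maxHeartbeats 1000000

namespace St18
variable {m : ℕ}

/-- orthonormal family indexed by a finset -/
def OFam (g : (Fin m → ℝ) →ₗ[ℝ] (Fin m → ℝ) →ₗ[ℝ] ℝ) (e : ℕ → Fin m → ℝ) (ε : ℕ → ℝ)
    (s : Finset ℕ) : Prop :=
  (∀ i ∈ s, ε i = 1 ∨ ε i = -1) ∧ ∀ i ∈ s, ∀ j ∈ s, g (e i) (e j) = if i = j then ε i else 0

noncomputable def TOp (J : (Fin m → ℝ) → ((Fin m → ℝ) →ₗ[ℝ] (Fin m → ℝ))) (e : ℕ → Fin m → ℝ) (ε : ℕ → ℝ)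
    (s : Finset ℕ) : (Fin m → ℝ) →ₗ[ℝ] (Fin m → ℝ) :=
  ∑ i ∈ s, ε i • J (e i)

noncomputable def nct (ε : ℕ → ℝ) (s : Finset ℕ) : ℕ := #(s.filter fun i => ε i = -1)
noncomputable def pct (ε : ℕ → ℝ) (s : Finset ℕ) : ℕ := #(s.filter fun i => ε i = 1)

lemma OFam.subset {g e ε} {s t : Finset ℕ} (h : OFam (m := m) g e ε s) (hts : t ⊆ s) :
    OFam g e ε t :=
  ⟨fun i hi => h.1 i (hts hi), fun i hi j hj => h.2 i (hts hi) j (hts hj)⟩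

lemma nct_add_pct {ε : ℕ → ℝ} {s : Finset ℕ} (h : ∀ i ∈ s, ε i = 1 ∨ ε i = -1) :
    nct ε s + pct ε s = #s := by
  classical
  have : pct ε s = #(s.filter fun i => ¬ (ε i = -1)) := by
    unfold pct
    congr 1
    apply Finset.filter_congr
    intro i hi
    rcases h i hi with h1 | h1 <;> simp [h1] <;> norm_num
  rw [nct, this]
  exact Finset.card_filter_add_card_filter_not _

lemma card_filter_update {ε : ℕ → ℝ} {s : Finset ℕ} {i₀ : ℕ} (hi : i₀ ∈ s) (b c : ℝ) :
    #(s.filter fun i => Function.update ε i₀ b i = c)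
      = (if b = c then 1 else 0) + #((s.erase i₀).filter fun i => ε i = c) := by
  classical
  rw [Finset.card_filter, Finset.card_filter]
  have : (fun i => if Function.update ε i₀ b i = c then (1:ℕ) else 0)
      = Function.update (fun i => if ε i = c then (1:ℕ) else 0) i₀ (if b = c then 1 else 0) := by
    funext i
    rcases eq_or_ne i i₀ with rfl | hne
    · simp
    · simp [Function.update_of_ne hne]
  rw [this, Finset.sum_update_of_mem hi, Finset.erase_eq]

lemma card_filter_split {P : ℕ → Prop} [DecidablePred P] {s : Finset ℕ} {i₀ : ℕ} (hi : i₀ ∈ s) :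
    #(s.filter fun i => P i) = (if P i₀ then 1 else 0) + #((s.erase i₀).filter fun i => P i) := by
  classical
  rw [Finset.card_filter, Finset.card_filter, ← Finset.add_sum_erase _ _ hi]

lemma exists_neg_idx {ε : ℕ → ℝ} {s : Finset ℕ} (h : 0 < nct ε s) : ∃ i ∈ s, ε i = -1 := by
  classical
  obtain ⟨i, hi⟩ := Finset.card_pos.mp h
  exact ⟨i, (Finset.mem_filter.mp hi).1, (Finset.mem_filter.mp hi).2⟩

lemma exists_pos_idx {ε : ℕ → ℝ} {s : Finset ℕ} (h : 0 < pct ε s) : ∃ i ∈ s, ε i = 1 := by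
  classical
  obtain ⟨i, hi⟩ := Finset.card_pos.mp h
  exact ⟨i, (Finset.mem_filter.mp hi).1, (Finset.mem_filter.mp hi).2⟩

lemma nct_union {ε : ℕ → ℝ} {s t : Finset ℕ} (h : Disjoint s t) :
    nct ε (s ∪ t) = nct ε s + nct ε t := by
  classical
  unfold nct
  rw [Finset.filter_union]
  exact Finset.card_union_of_disjoint (Finset.disjoint_filter_filter h)

lemma pct_union {ε : ℕ → ℝ} {s t : Finset ℕ} (h : Disjoint s t) :
    pct ε (s ∪ t) = pct ε s + pct ε t := by
  classical
  unfold pct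
  rw [Finset.filter_union]
  exact Finset.card_union_of_disjoint (Finset.disjoint_filter_filter h)

lemma TOp_union {J e ε} {s t : Finset ℕ} (h : Disjoint s t) :
    TOp (m := m) J e ε (s ∪ t) = TOp J e ε s + TOp J e ε t :=
  Finset.sum_union h

lemma TOp_congr {J} {e e' : ℕ → Fin m → ℝ} {ε ε' : ℕ → ℝ} {s : Finset ℕ}
    (he : ∀ i ∈ s, e i = e' i) (hε : ∀ i ∈ s, ε i = ε' i) :
    TOp J e ε s = TOp J e' ε' s :=
  Finset.sum_congr rfl fun i hi => by rw [he i hi, hε i hi]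

lemma TOp_update {J} {e : ℕ → Fin m → ℝ} {ε : ℕ → ℝ} {s : Finset ℕ} {i₀ : ℕ}
    (hi : i₀ ∈ s) (w : Fin m → ℝ) (b : ℝ) :
    TOp J (Function.update e i₀ w) (Function.update ε i₀ b) s
      = b • J w + TOp J e ε (s.erase i₀) := by
  classical
  unfold TOp
  have : (fun i => Function.update ε i₀ b i • J (Function.update e i₀ w i))
      = Function.update (fun i => ε i • J (e i)) i₀ (b • J w) := by
    funext i
    rcases eq_or_ne i i₀ with rfl | hne
    · simp
    · simp [Function.update_of_ne hne]
  rw [this, Finset.sum_update_of_mem hi, Finset.erase_eq]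

lemma TOp_split {J} {e : ℕ → Fin m → ℝ} {ε : ℕ → ℝ} {s : Finset ℕ} {i₀ : ℕ} (hi : i₀ ∈ s) :
    TOp (m := m) J e ε s = ε i₀ • J (e i₀) + TOp J e ε (s.erase i₀) :=
  (Finset.add_sum_erase _ _ hi).symm

section FamTool
variable {ι : Type*} [Fintype ι] {g : (Fin m → ℝ) →ₗ[ℝ] (Fin m → ℝ) →ₗ[ℝ] ℝ}
  {F : ι → Fin m → ℝ} {Φ : ι → ℝ}

lemma gsum (hd : ∀ i, g (F i) (F i) = Φ i) (ho : ∀ i j, i ≠ j → g (F i) (F j) = 0)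
    (c : ι → ℝ) (j : ι) : g (∑ i, c i • F i) (F j) = c j * Φ j := by
  rw [map_sum, LinearMap.sum_apply]
  rw [Finset.sum_eq_single j]
  · rw [map_smul, LinearMap.smul_apply, smul_eq_mul, hd]
  · intro i _ hij
    rw [map_smul, LinearMap.smul_apply, smul_eq_mul, ho i j hij, mul_zero]
  · intro h
    exact absurd (Finset.mem_univ j) h

lemma gdiag (hd : ∀ i, g (F i) (F i) = Φ i) (ho : ∀ i j, i ≠ j → g (F i) (F j) = 0)
    (c : ι → ℝ) : g (∑ i, c i • F i) (∑ i, c i • F i) = ∑ i, Φ i * c i ^ 2 := by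
  have hterm : ∀ j, g (∑ i, c i • F i) (c j • F j) = Φ j * c j ^ 2 := by
    intro j
    rw [map_smul, smul_eq_mul, gsum hd ho c j]
    ring
  rw [map_sum, Finset.sum_congr rfl fun j _ => hterm j]

lemma findep (hd : ∀ i, g (F i) (F i) = Φ i) (ho : ∀ i j, i ≠ j → g (F i) (F j) = 0)
    (hpm : ∀ i, Φ i = 1 ∨ Φ i = -1) : LinearIndependent ℝ F := by
  rw [Fintype.linearIndependent_iff]
  intro c hc i
  have h0 : g (∑ i, c i • F i) (F i) = c i * Φ i := gsum hd ho c i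
  rw [hc, map_zero, LinearMap.zero_apply] at h0
  rcases hpm i with h1 | h1 <;> rw [h1] at h0 <;> linarith

lemma expandCoeff (hd : ∀ i, g (F i) (F i) = Φ i) (ho : ∀ i j, i ≠ j → g (F i) (F j) = 0)
    (hpm : ∀ i, Φ i = 1 ∨ Φ i = -1) {z : Fin m → ℝ}
    (hz : z ∈ Submodule.span ℝ (Set.range F)) :
    z = ∑ i, (Φ i * g z (F i)) • F i := by
  obtain ⟨c, hc⟩ := (Submodule.mem_span_range_iff_exists_fun ℝ).mp hz
  have hcoeff : ∀ j, g z (F j) = c j * Φ j := fun j => by rw [← hc]; exact gsum hd ho c j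
  have hc' : ∀ j, Φ j * g z (F j) = c j := by
    intro j
    rw [hcoeff j]
    rcases hpm j with h1 | h1 <;> rw [h1] <;> ring
  rw [Finset.sum_congr rfl fun j _ => by rw [hc' j]]
  exact hc.symm

/-- positive-side clauses of HasSignature -/
lemma posHalf (hd : ∀ i, g (F i) (F i) = Φ i) (ho : ∀ i j, i ≠ j → g (F i) (F j) = 0)
    (hpm : ∀ i, Φ i = 1 ∨ Φ i = -1) :
    (∃ W : Submodule ℝ (Fin m → ℝ), W ≤ Submodule.span ℝ (Set.range F) ∧
        finrank ℝ W = #(univ.filter fun i => Φ i = 1) ∧ ∀ z ∈ W, z ≠ 0 → 0 < g z z) ∧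
    (∀ W : Submodule ℝ (Fin m → ℝ), W ≤ Submodule.span ℝ (Set.range F) →
        (∀ z ∈ W, z ≠ 0 → 0 < g z z) → finrank ℝ W ≤ #(univ.filter fun i => Φ i = 1)) := by
  have hd' : ∀ i : {i : ι // Φ i = 1}, g (F i.val) (F i.val) = Φ i.val := fun i => hd i.val
  have ho' : ∀ i j : {i : ι // Φ i = 1}, i ≠ j → g (F i.val) (F j.val) = 0 :=
    fun i j hij => ho i.val j.val (fun hh => hij (Subtype.ext hh))
  have li : LinearIndependent ℝ (fun i : {i : ι // Φ i = 1} => F i.val) :=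
    (findep hd ho hpm).comp Subtype.val Subtype.val_injective
  constructor
  · refine ⟨Submodule.span ℝ (Set.range fun i : {i : ι // Φ i = 1} => F i.val), ?_, ?_, ?_⟩
    · apply Submodule.span_mono
      rintro x ⟨i, rfl⟩
      exact ⟨i, rfl⟩
    · exact (finrank_span_eq_card li).trans (Fintype.card_subtype _)
    · intro z hz hz0
      obtain ⟨c, hc⟩ := (Submodule.mem_span_range_iff_exists_fun ℝ).mp hz
      have hdd := gdiag hd' ho' c
      rw [hc] at hdd
      rw [hdd]
      have hcne : ∃ i, c i ≠ 0 := by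
        by_contra hall
        push_neg at hall
        apply hz0
        rw [← hc]
        simp [hall]
      obtain ⟨i0, hi0⟩ := hcne
      apply Finset.sum_pos'
      · intro i _
        rw [i.2, one_mul]
        positivity
      · refine ⟨i0, Finset.mem_univ _, ?_⟩
        rw [i0.2, one_mul]
        exact (pow_pos (abs_pos.mpr hi0) 2).trans_eq (sq_abs _)
  · intro W hW hWpos
    set lmap : (Fin m → ℝ) →ₗ[ℝ] ({i : ι // Φ i = 1} → ℝ) :=
      LinearMap.pi (fun i => g.flip (F i.val)) with hlmap
    have hinj : Function.Injective (lmap.comp W.subtype) := by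
      intro a b hab
      have hsub : lmap ((a : Fin m → ℝ) - b) = 0 := by
        rw [map_sub, sub_eq_zero]
        exact hab
      set w : Fin m → ℝ := (a : Fin m → ℝ) - b with hw
      have hwW : w ∈ W := W.sub_mem a.2 b.2
      have hcoords : ∀ i : ι, Φ i = 1 → g w (F i) = 0 := by
        intro i hi
        have := congrFun hsub ⟨i, hi⟩
        simpa [hlmap, LinearMap.pi_apply, LinearMap.flip_apply] using this
      have hexp := expandCoeff hd ho hpm (hW hwW)
      have hgww : g w w = ∑ i, Φ i * (Φ i * g w (F i)) ^ 2 := by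
        conv_lhs => rw [hexp]
        rw [gdiag hd ho]
      have hle : g w w ≤ 0 := by
        rw [hgww]
        apply Finset.sum_nonpos
        intro i _
        rcases hpm i with h1 | h1
        · rw [hcoords i h1]
          simp
        · rw [h1]
          nlinarith [sq_nonneg (-1 * g w (F i))]
      have hw0 : w = 0 := by
        by_contra hne
        exact absurd (hWpos w hwW hne) (not_lt.mpr hle)
      exact Subtype.ext (sub_eq_zero.mp hw0)
    calc finrank ℝ W ≤ finrank ℝ ({i : ι // Φ i = 1} → ℝ) :=
          LinearMap.finrank_le_finrank_of_injective hinj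
      _ = #(univ.filter fun i => Φ i = 1) := by
          rw [finrank_pi]; exact Fintype.card_subtype _

/-- negative-side clauses, by applying `posHalf` to `-g`. -/
lemma negHalf (hd : ∀ i, g (F i) (F i) = Φ i) (ho : ∀ i j, i ≠ j → g (F i) (F j) = 0)
    (hpm : ∀ i, Φ i = 1 ∨ Φ i = -1) :
    (∃ W : Submodule ℝ (Fin m → ℝ), W ≤ Submodule.span ℝ (Set.range F) ∧
        finrank ℝ W = #(univ.filter fun i => Φ i = -1) ∧ ∀ z ∈ W, z ≠ 0 → g z z < 0) ∧
    (∀ W : Submodule ℝ (Fin m → ℝ), W ≤ Submodule.span ℝ (Set.range F) →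
        (∀ z ∈ W, z ≠ 0 → g z z < 0) → finrank ℝ W ≤ #(univ.filter fun i => Φ i = -1)) := by
  have hd' : ∀ i, (-g) (F i) (F i) = (-Φ) i := by
    intro i
    simp [LinearMap.neg_apply, hd]
  have ho' : ∀ i j, i ≠ j → (-g) (F i) (F j) = 0 := by
    intro i j hij
    simp [LinearMap.neg_apply, ho i j hij]
  have hpm' : ∀ i, (-Φ) i = 1 ∨ (-Φ) i = -1 := by
    intro i
    rcases hpm i with h | h <;> simp [h]
  have hcnt : #(univ.filter fun i => (-Φ) i = 1) = #(univ.filter fun i => Φ i = -1) := by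
    congr 1
    apply Finset.filter_congr
    intro i _
    simp only [Pi.neg_apply, eq_iff_iff]
    constructor <;> intro h <;> linarith
  have H := posHalf (g := -g) (Φ := -Φ) hd' ho' hpm'
  rw [hcnt] at H
  constructor
  · obtain ⟨W, h1, h2, h3⟩ := H.1
    refine ⟨W, h1, h2, fun z hz hz0 => ?_⟩
    have := h3 z hz hz0
    simp only [LinearMap.neg_apply, Pi.neg_apply, neg_pos] at this
    exact this
  · intro W hW hWneg
    apply H.2 W hW
    intro z hz hz0
    have := hWneg z hz hz0
    simp only [LinearMap.neg_apply, Pi.neg_apply, neg_pos]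
    exact this

lemma hasSigOfFam (hd : ∀ i, g (F i) (F i) = Φ i) (ho : ∀ i j, i ≠ j → g (F i) (F j) = 0)
    (hpm : ∀ i, Φ i = 1 ∨ Φ i = -1) :
    HasSignature (fun z w => g z w) (Submodule.span ℝ (Set.range F))
      #(univ.filter fun i => Φ i = -1) #(univ.filter fun i => Φ i = 1) := by
  refine ⟨?_, (negHalf hd ho hpm).1, (negHalf hd ho hpm).2,
    (posHalf hd ho hpm).1, (posHalf hd ho hpm).2⟩
  intro z hz h0
  have hexp := expandCoeff hd ho hpm hz
  have hz0 : ∀ i, g z (F i) = 0 := fun i => h0 (F i) (Submodule.subset_span ⟨i, rfl⟩)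
  rw [hexp, Finset.sum_congr rfl fun i _ => by rw [hz0 i]]
  simp

lemma countsOfSig (hd : ∀ i, g (F i) (F i) = Φ i) (ho : ∀ i j, i ≠ j → g (F i) (F j) = 0)
    (hpm : ∀ i, Φ i = 1 ∨ Φ i = -1) {r' s' : ℕ} (hn : Fintype.card ι = r' + s')
    (hsig : HasSignature (fun z w => g z w) (Submodule.span ℝ (Set.range F)) r' s') :
    #(univ.filter fun i => Φ i = -1) = r' ∧ #(univ.filter fun i => Φ i = 1) = s' := by
  obtain ⟨Wn, hWn1, hWn2, hWn3⟩ := (negHalf hd ho hpm).1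
  obtain ⟨Wp, hWp1, hWp2, hWp3⟩ := (posHalf hd ho hpm).1
  have h1 : #(univ.filter fun i => Φ i = -1) ≤ r' := by
    rw [← hWn2]
    exact hsig.2.2.1 Wn hWn1 hWn3
  have h2 : #(univ.filter fun i => Φ i = 1) ≤ s' := by
    rw [← hWp2]
    exact hsig.2.2.2.2 Wp hWp1 hWp3
  have h3 : #(univ.filter fun i => Φ i = -1) + #(univ.filter fun i => Φ i = 1)
      = Fintype.card ι := by
    have he : (univ.filter fun i => Φ i = 1) = (univ.filter fun i => ¬ (Φ i = -1)) := by
      apply Finset.filter_congr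
      intro i _
      rcases hpm i with h | h <;> simp [h] <;> norm_num
    rw [he, Finset.card_filter_add_card_filter_not, Finset.card_univ]
  omega

end FamTool

section Ops
variable {g : (Fin m → ℝ) →ₗ[ℝ] (Fin m → ℝ) →ₗ[ℝ] ℝ}

lemma opext (gnd : ∀ z : Fin m → ℝ, (∀ w, g z w = 0) → z = 0)
    {L M : (Fin m → ℝ) →ₗ[ℝ] (Fin m → ℝ)} (h : ∀ y w, g (L y) w = g (M y) w) : L = M := by
  apply LinearMap.ext
  intro y
  have h0 : ∀ w, g (L y - M y) w = 0 := by
    intro w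
    rw [map_sub, LinearMap.sub_apply, h y w, sub_self]
  exact sub_eq_zero.mp (gnd _ h0)

lemma J_mix (gnd : ∀ z : Fin m → ℝ, (∀ w, g z w = 0) → z = 0)
    {A : (Fin m → ℝ) →ₗ[ℝ] (Fin m → ℝ) →ₗ[ℝ] (Fin m → ℝ) →ₗ[ℝ] (Fin m → ℝ) →ₗ[ℝ] ℝ}
    {J : (Fin m → ℝ) → ((Fin m → ℝ) →ₗ[ℝ] (Fin m → ℝ))}
    (hJ : ∀ x y z, g (J x y) z = A y x x z) (x v : Fin m → ℝ) (α γ : ℝ) :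
    J (α • x + γ • v)
      = (α^2) • J x + (α*γ) • (J (x+v) - J x - J v) + (γ^2) • J v := by
  apply opext gnd
  intro y w
  simp only [LinearMap.add_apply, LinearMap.smul_apply, LinearMap.sub_apply, map_add, map_sub,
    map_smul, smul_eq_mul, hJ, Pi.smul_apply]
  ring

/-- Finset-indexed versions of gram computations -/
lemma gsumS {e ε} {s : Finset ℕ} (hf : OFam g e ε s) (c : ℕ → ℝ) {j : ℕ} (hj : j ∈ s) :
    g (∑ i ∈ s, c i • e i) (e j) = c j * ε j := by
  rw [map_sum, LinearMap.sum_apply, Finset.sum_eq_single_of_mem j hj]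
  · rw [map_smul, LinearMap.smul_apply, smul_eq_mul, hf.2 j hj j hj, if_pos rfl]
  · intro i hi hij
    rw [map_smul, LinearMap.smul_apply, smul_eq_mul, hf.2 i hi j hj, if_neg hij, mul_zero]

lemma gsumS' {e : ℕ → Fin m → ℝ} {s : Finset ℕ} (c : ℕ → ℝ) (x : Fin m → ℝ) :
    g x (∑ i ∈ s, c i • e i) = ∑ i ∈ s, c i * g x (e i) := by
  rw [map_sum]
  exact Finset.sum_congr rfl fun i _ => by rw [map_smul, smul_eq_mul]

lemma gdiagS {e ε} {s : Finset ℕ} (hf : OFam g e ε s) (c : ℕ → ℝ) :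
    g (∑ i ∈ s, c i • e i) (∑ i ∈ s, c i • e i) = ∑ i ∈ s, ε i * c i ^ 2 := by
  rw [gsumS' c]
  apply Finset.sum_congr rfl
  intro i hi
  rw [gsumS hf c hi]
  ring

lemma exists_unit_pos {qq : ℕ} (gsymm : ∀ z w, g z w = g w z)
    (posmax : ∃ W : Submodule ℝ (Fin m → ℝ), finrank ℝ W = qq ∧ ∀ z ∈ W, z ≠ 0 → 0 < g z z)
    {e ε} {s : Finset ℕ} (hf : OFam g e ε s) (hq : pct ε s < qq) :
    ∃ v, g v v = 1 ∧ ∀ j ∈ s, g v (e j) = 0 := by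
  have key : ∃ w, (∀ j ∈ s, g w (e j) = 0) ∧ 0 < g w w := by
    by_contra hno
    push_neg at hno
    obtain ⟨W, hWrank, hWpos⟩ := posmax
    set lmap : (Fin m → ℝ) →ₗ[ℝ] (↥(s.filter fun i => ε i = 1) → ℝ) :=
      LinearMap.pi (fun i => g.flip (e i.val)) with hlmap
    have hinj : Function.Injective (lmap.comp W.subtype) := by
      intro a b hab
      have hsub : lmap ((a : Fin m → ℝ) - b) = 0 := by
        rw [map_sub, sub_eq_zero]; exact hab
      set w : Fin m → ℝ := (a : Fin m → ℝ) - b with hwdef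
      have hwW : w ∈ W := W.sub_mem a.2 b.2
      have hcoords : ∀ i ∈ s, ε i = 1 → g w (e i) = 0 := by
        intro i hi hεi
        have := congrFun hsub ⟨i, Finset.mem_filter.mpr ⟨hi, hεi⟩⟩
        simpa [hlmap, LinearMap.pi_apply, LinearMap.flip_apply] using this
      have horth : ∀ j ∈ s,
          g (w - ∑ i ∈ s, (ε i * g w (e i)) • e i) (e j) = 0 := by
        intro j hj
        rw [map_sub, LinearMap.sub_apply, gsumS hf _ hj]
        rcases hf.1 j hj with h1 | h1 <;> rw [h1] <;> ring
      have hgww : g (w - ∑ i ∈ s, (ε i * g w (e i)) • e i)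
            (w - ∑ i ∈ s, (ε i * g w (e i)) • e i)
          = g w w - ∑ i ∈ s, ε i * (g w (e i))^2 := by
        simp only [map_sub, LinearMap.sub_apply]
        rw [gdiagS hf, gsymm (∑ i ∈ s, (ε i * g w (e i)) • e i) w, gsumS' _ w]
        have e1 : ∑ i ∈ s, (ε i * g w (e i)) * g w (e i)
            = ∑ i ∈ s, ε i * (g w (e i))^2 :=
          Finset.sum_congr rfl fun i _ => by ring
        have e2 : ∑ i ∈ s, ε i * (ε i * g w (e i)) ^ 2
            = ∑ i ∈ s, ε i * (g w (e i))^2 := by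
          apply Finset.sum_congr rfl
          intro i hi
          rcases hf.1 i hi with h1 | h1 <;> rw [h1] <;> ring
        rw [e1, e2]
        ring
      have hsum_nonpos : ∑ i ∈ s, ε i * (g w (e i))^2 ≤ 0 := by
        apply Finset.sum_nonpos
        intro i hi
        rcases hf.1 i hi with h1 | h1
        · rw [hcoords i hi h1]
          simp
        · rw [h1]
          nlinarith [sq_nonneg (g w (e i))]
      have hww : g w w ≤ 0 := by
        have := hno _ horth
        rw [hgww] at this
        linarith
      have hw0 : w = 0 := by
        by_contra hne
        exact absurd (hWpos w hwW hne) (not_lt.mpr hww)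
      exact Subtype.ext (sub_eq_zero.mp hw0)
    have hrank : qq ≤ pct ε s := by
      calc qq = finrank ℝ W := hWrank.symm
        _ ≤ finrank ℝ (↥(s.filter fun i => ε i = 1) → ℝ) :=
            LinearMap.finrank_le_finrank_of_injective hinj
        _ = pct ε s := by rw [finrank_pi, Fintype.card_coe]; rfl
    omega
  obtain ⟨w, hworth, hwpos⟩ := key
  refine ⟨(Real.sqrt (g w w))⁻¹ • w, ?_, ?_⟩
  · simp only [map_smul, LinearMap.smul_apply, smul_eq_mul]
    rw [← mul_assoc, ← mul_inv, Real.mul_self_sqrt hwpos.le,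
      inv_mul_cancel₀ (ne_of_gt hwpos)]
  · intro j hj
    rw [map_smul, LinearMap.smul_apply, smul_eq_mul, hworth j hj, mul_zero]

lemma OFam.neg {e ε} {s : Finset ℕ} (hf : OFam g e ε s) : OFam (-g) e (fun i => -ε i) s := by
  constructor
  · intro i hi
    rcases hf.1 i hi with h | h <;> simp [h]
  · intro i hi j hj
    simp only [LinearMap.neg_apply, Pi.neg_apply, hf.2 i hi j hj]
    split <;> simp

lemma pct_neg {ε} {s : Finset ℕ} : pct (fun i => -ε i) s = nct ε s := by
  unfold pct nct
  congr 1
  apply Finset.filter_congr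
  intro i _
  constructor <;> intro h <;> simp at * <;> linarith

lemma exists_unit_neg {pp : ℕ} (gsymm : ∀ z w, g z w = g w z)
    (negmax : ∃ W : Submodule ℝ (Fin m → ℝ), finrank ℝ W = pp ∧ ∀ z ∈ W, z ≠ 0 → g z z < 0)
    {e ε} {s : Finset ℕ} (hf : OFam g e ε s) (hp : nct ε s < pp) :
    ∃ v, g v v = -1 ∧ ∀ j ∈ s, g v (e j) = 0 := by
  have gsymm' : ∀ z w, (-g) z w = (-g) w z := by
    intro z w
    simp [LinearMap.neg_apply, gsymm z w]
  have posmax' : ∃ W : Submodule ℝ (Fin m → ℝ), finrank ℝ W = pp ∧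
      ∀ z ∈ W, z ≠ 0 → 0 < (-g) z z := by
    obtain ⟨W, h1, h2⟩ := negmax
    exact ⟨W, h1, fun z hz hz0 => by
      simp only [LinearMap.neg_apply, Pi.neg_apply, neg_pos]; exact h2 z hz hz0⟩
  have hq' : pct (fun i => -ε i) s < pp := by rw [pct_neg]; exact hp
  obtain ⟨v, hv1, hv2⟩ := exists_unit_pos gsymm' posmax' hf.neg hq'
  refine ⟨v, ?_, ?_⟩
  · simp only [LinearMap.neg_apply, Pi.neg_apply] at hv1
    linarith
  · intro j hj
    have := hv2 j hj
    simp only [LinearMap.neg_apply, Pi.neg_apply, neg_eq_zero] at this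
    exact this

end Ops

section Extend
variable {g : (Fin m → ℝ) →ₗ[ℝ] (Fin m → ℝ) →ₗ[ℝ] ℝ}

lemma OFam.insert_update (gsymm : ∀ z w, g z w = g w z) {e ε} {s : Finset ℕ}
    (hf : OFam g e ε s) {j : ℕ} (hj : j ∉ s) {v : Fin m → ℝ} {σ : ℝ}
    (hσ : σ = 1 ∨ σ = -1) (hv : g v v = σ) (horth : ∀ i ∈ s, g v (e i) = 0) :
    OFam g (Function.update e j v) (Function.update ε j σ) (insert j s) := by
  constructor
  · intro i hi
    rcases Finset.mem_insert.mp hi with rfl | hi'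
    · simpa using hσ
    · rw [Function.update_of_ne (ne_of_mem_of_not_mem hi' hj)]
      exact hf.1 i hi'
  · intro i hi k hk
    rcases Finset.mem_insert.mp hi with rfl | hi'
    · rcases Finset.mem_insert.mp hk with h2 | hk'
      · subst h2
        simpa using hv
      · have hne : i ≠ k := fun h => hj (h ▸ hk')
        rw [Function.update_self, Function.update_of_ne (Ne.symm hne), if_neg hne]
        exact horth k hk'
    · rcases Finset.mem_insert.mp hk with h2 | hk'
      · subst h2
        have hne : i ≠ k := fun h => hj (h ▸ hi')
        rw [Function.update_self, Function.update_of_ne hne, if_neg hne]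
        rw [gsymm]
        exact horth i hi'
      · rw [Function.update_of_ne (ne_of_mem_of_not_mem hi' hj),
          Function.update_of_ne (ne_of_mem_of_not_mem hk' hj),
          Function.update_of_ne (ne_of_mem_of_not_mem hi' hj)]
        exact hf.2 i hi' k hk'

lemma ct_insert_update {ε : ℕ → ℝ} {s : Finset ℕ} {j : ℕ} (hj : j ∉ s) (c b : ℝ) :
    #((insert j s).filter fun i => Function.update ε j b i = c)
      = (if b = c then 1 else 0) + #(s.filter fun i => ε i = c) := by
  have hfe : (s.filter fun i => Function.update ε j b i = c) = s.filter fun i => ε i = c :=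
    Finset.filter_congr fun i hi => by
      simp [Function.update_of_ne (ne_of_mem_of_not_mem hi hj)]
  rw [Finset.filter_insert]
  by_cases hb : b = c
  · rw [if_pos (by simpa using hb), if_pos hb,
      Finset.card_insert_of_notMem (fun h => hj (Finset.filter_subset _ _ h)), hfe]
    omega
  · rw [if_neg (by simpa using hb), if_neg hb, hfe, zero_add]

lemma nct_insert_update {ε : ℕ → ℝ} {s : Finset ℕ} {j : ℕ} (hj : j ∉ s) (b : ℝ) :
    nct (Function.update ε j b) (insert j s) = (if b = -1 then 1 else 0) + nct ε s :=
  ct_insert_update hj (-1) b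

lemma pct_insert_update {ε : ℕ → ℝ} {s : Finset ℕ} {j : ℕ} (hj : j ∉ s) (b : ℝ) :
    pct (Function.update ε j b) (insert j s) = (if b = 1 then 1 else 0) + pct ε s :=
  ct_insert_update hj 1 b

lemma extend_full (gsymm : ∀ z w, g z w = g w z) {p q : ℕ} (hpq : p + q = m)
    (negmax : ∃ W : Submodule ℝ (Fin m → ℝ), finrank ℝ W = p ∧ ∀ z ∈ W, z ≠ 0 → g z z < 0)
    (posmax : ∃ W : Submodule ℝ (Fin m → ℝ), finrank ℝ W = q ∧ ∀ z ∈ W, z ≠ 0 → 0 < g z z) :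
    ∀ (d : ℕ) (s : Finset ℕ) (e : ℕ → Fin m → ℝ) (ε : ℕ → ℝ), #s + d = m → s ⊆ range m →
    OFam g e ε s → nct ε s ≤ p → pct ε s ≤ q →
    ∃ e' ε', OFam g e' ε' (range m) ∧ nct ε' (range m) = p ∧ pct ε' (range m) = q ∧
      (∀ i ∈ s, e' i = e i) ∧ (∀ i ∈ s, ε' i = ε i) := by
  intro d
  induction d with
  | zero =>
    intro s e ε hcard hsub hf hn hp
    have hseq : s = range m :=
      Finset.eq_of_subset_of_card_le hsub (by rw [Finset.card_range]; omega)
    subst hseq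
    have hsum := nct_add_pct hf.1
    refine ⟨e, ε, hf, ?_, ?_, fun i _ => rfl, fun i _ => rfl⟩ <;>
      rw [Finset.card_range] at hsum <;> omega
  | succ d ih =>
    intro s e ε hcard hsub hf hn hp
    have hne : (range m \ s).Nonempty := by
      rw [← Finset.card_pos, Finset.card_sdiff_of_subset hsub, Finset.card_range]
      omega
    obtain ⟨j, hjmem⟩ := hne
    have hjm : j ∈ range m := (Finset.mem_sdiff.mp hjmem).1
    have hjs : j ∉ s := (Finset.mem_sdiff.mp hjmem).2
    have hcardi : #(insert j s) + d = m := by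
      rw [Finset.card_insert_of_notMem hjs]; omega
    have hsubi : insert j s ⊆ range m := Finset.insert_subset hjm hsub
    by_cases hcase : nct ε s < p
    · obtain ⟨v, hv1, hv2⟩ := exists_unit_neg gsymm negmax hf hcase
      have hf' := hf.insert_update gsymm hjs (Or.inr rfl) hv1 hv2
      have hn' : nct (Function.update ε j (-1)) (insert j s) = nct ε s + 1 := by
        rw [nct_insert_update hjs, if_pos rfl]; omega
      have hp' : pct (Function.update ε j (-1)) (insert j s) = pct ε s := by
        rw [pct_insert_update hjs, if_neg (by norm_num)]; omega
      obtain ⟨e', ε', h1, h2, h3, h4, h5⟩ := ih (insert j s) _ _ hcardi hsubi hf'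
        (by omega) (by omega)
      refine ⟨e', ε', h1, h2, h3, fun i hi => ?_, fun i hi => ?_⟩
      · rw [h4 i (Finset.mem_insert_of_mem hi),
          Function.update_of_ne (ne_of_mem_of_not_mem hi hjs)]
      · rw [h5 i (Finset.mem_insert_of_mem hi),
          Function.update_of_ne (ne_of_mem_of_not_mem hi hjs)]
    · have hceq : nct ε s = p := le_antisymm hn (not_lt.mp hcase)
      have hqlt : pct ε s < q := by
        have := nct_add_pct hf.1
        have : #s < m := by omega
        omega
      obtain ⟨v, hv1, hv2⟩ := exists_unit_pos gsymm posmax hf hqlt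
      have hf' := hf.insert_update gsymm hjs (Or.inl rfl) hv1 hv2
      have hn' : nct (Function.update ε j 1) (insert j s) = nct ε s := by
        rw [nct_insert_update hjs, if_neg (by norm_num)]; omega
      have hp' : pct (Function.update ε j 1) (insert j s) = pct ε s + 1 := by
        rw [pct_insert_update hjs, if_pos rfl]; omega
      obtain ⟨e', ε', h1, h2, h3, h4, h5⟩ := ih (insert j s) _ _ hcardi hsubi hf'
        (by omega) (by omega)
      refine ⟨e', ε', h1, h2, h3, fun i hi => ?_, fun i hi => ?_⟩
      · rw [h4 i (Finset.mem_insert_of_mem hi),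
          Function.update_of_ne (ne_of_mem_of_not_mem hi hjs)]
      · rw [h5 i (Finset.mem_insert_of_mem hi),
          Function.update_of_ne (ne_of_mem_of_not_mem hi hjs)]

lemma exists_full_frame (gsymm : ∀ z w, g z w = g w z) {p q : ℕ} (hpq : p + q = m)
    (negmax : ∃ W : Submodule ℝ (Fin m → ℝ), finrank ℝ W = p ∧ ∀ z ∈ W, z ≠ 0 → g z z < 0)
    (posmax : ∃ W : Submodule ℝ (Fin m → ℝ), finrank ℝ W = q ∧ ∀ z ∈ W, z ≠ 0 → 0 < g z z) :
    ∃ e ε, OFam g e ε (range m) ∧ nct ε (range m) = p ∧ pct ε (range m) = q := by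
  have hempty : OFam g (fun _ => 0) (fun _ => 1) (∅ : Finset ℕ) := by
    constructor <;> intro i hi <;> exact absurd hi (Finset.notMem_empty i)
  obtain ⟨e', ε', h1, h2, h3, _, _⟩ := extend_full gsymm hpq negmax posmax m ∅ _ _
    (by simp) (by simp) hempty (by simp [nct]) (by simp [pct])
  exact ⟨e', ε', h1, h2, h3⟩

lemma exists_subframe (gsymm : ∀ z w, g z w = g w z) {p q : ℕ} (hpq : p + q = m)
    (negmax : ∃ W : Submodule ℝ (Fin m → ℝ), finrank ℝ W = p ∧ ∀ z ∈ W, z ≠ 0 → g z z < 0)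
    (posmax : ∃ W : Submodule ℝ (Fin m → ℝ), finrank ℝ W = q ∧ ∀ z ∈ W, z ≠ 0 → 0 < g z z)
    {r' s' : ℕ} (hr : r' ≤ p) (hs : s' ≤ q) :
    ∃ (e : ℕ → Fin m → ℝ) (ε : ℕ → ℝ) (t : Finset ℕ), t ⊆ range m ∧ #t = r' + s' ∧
      OFam g e ε t ∧ nct ε t = r' ∧ pct ε t = s' := by
  obtain ⟨e, ε, hf, hn, hp⟩ := exists_full_frame gsymm hpq negmax posmax
  have hr' : r' ≤ #((range m).filter fun i => ε i = -1) := by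
    have : nct ε (range m) = #((range m).filter fun i => ε i = -1) := rfl
    omega
  have hs' : s' ≤ #((range m).filter fun i => ε i = 1) := by
    have : pct ε (range m) = #((range m).filter fun i => ε i = 1) := rfl
    omega
  obtain ⟨t1, ht1sub, ht1card⟩ := Finset.exists_subset_card_eq hr'
  obtain ⟨t2, ht2sub, ht2card⟩ := Finset.exists_subset_card_eq hs'
  have ht1neg : ∀ i ∈ t1, ε i = -1 := fun i hi => (Finset.mem_filter.mp (ht1sub hi)).2
  have ht2pos : ∀ i ∈ t2, ε i = 1 := fun i hi => (Finset.mem_filter.mp (ht2sub hi)).2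
  have hdisj : Disjoint t1 t2 := by
    rw [Finset.disjoint_left]
    intro i hi1 hi2
    have := ht1neg i hi1
    have := ht2pos i hi2
    linarith
  have ht1r : t1 ⊆ range m := ht1sub.trans (Finset.filter_subset _ _)
  have ht2r : t2 ⊆ range m := ht2sub.trans (Finset.filter_subset _ _)
  refine ⟨e, ε, t1 ∪ t2, Finset.union_subset ht1r ht2r, ?_, hf.subset (Finset.union_subset ht1r ht2r), ?_, ?_⟩
  · rw [Finset.card_union_of_disjoint hdisj, ht1card, ht2card]
  · unfold nct
    have : (t1 ∪ t2).filter (fun i => ε i = -1) = t1 := by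
      apply Finset.Subset.antisymm
      · intro i hi
        obtain ⟨hiu, hie⟩ := Finset.mem_filter.mp hi
        rcases Finset.mem_union.mp hiu with h | h
        · exact h
        · exact absurd (ht2pos i h) (by rw [hie]; norm_num)
      · intro i hi
        exact Finset.mem_filter.mpr ⟨Finset.mem_union_left _ hi, ht1neg i hi⟩
    rw [this, ht1card]
  · unfold pct
    have : (t1 ∪ t2).filter (fun i => ε i = 1) = t2 := by
      apply Finset.Subset.antisymm
      · intro i hi
        obtain ⟨hiu, hie⟩ := Finset.mem_filter.mp hi
        rcases Finset.mem_union.mp hiu with h | h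
        · exact absurd (ht1neg i h) (by rw [hie]; norm_num)
        · exact h
      · intro i hi
        exact Finset.mem_filter.mpr ⟨Finset.mem_union_right _ hi, ht2pos i hi⟩
    rw [this, ht2card]

end Extend

section Core
variable {g : (Fin m → ℝ) →ₗ[ℝ] (Fin m → ℝ) →ₗ[ℝ] ℝ}

lemma J_smul (gnd : ∀ z : Fin m → ℝ, (∀ w, g z w = 0) → z = 0)
    {A : (Fin m → ℝ) →ₗ[ℝ] (Fin m → ℝ) →ₗ[ℝ] (Fin m → ℝ) →ₗ[ℝ] (Fin m → ℝ) →ₗ[ℝ] ℝ}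
    {J : (Fin m → ℝ) → ((Fin m → ℝ) →ₗ[ℝ] (Fin m → ℝ))}
    (hJ : ∀ x y z, g (J x y) z = A y x x z) (x : Fin m → ℝ) (t : ℝ) :
    J (t • x) = (t^2) • J x := by
  have h := J_mix gnd hJ x 0 t 0
  simpa using h

/-- `det` of the scaled characteristic matrix. -/
lemma det_scale {c : ℝ} (hc : c ≠ 0) (N : Matrix (Fin m) (Fin m) ℝ) :
    (Matrix.of fun i j => (if i = j then Polynomial.C c * Polynomial.X else 0)
        - Polynomial.C (N i j)).det
      = Polynomial.C (c^m) * (c⁻¹ • N).charpoly := by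
  have hmat : (Matrix.of fun i j : Fin m => (if i = j then Polynomial.C c * Polynomial.X else 0)
        - Polynomial.C (N i j))
      = (Polynomial.C c) • Matrix.charmatrix (c⁻¹ • N) := by
    ext i j
    by_cases h : i = j
    · subst h
      rw [Matrix.smul_apply, Matrix.charmatrix_apply_eq, Matrix.of_apply, if_pos rfl,
        Matrix.smul_apply, smul_eq_mul, smul_eq_mul, mul_sub, ← Polynomial.C_mul]
      congr 2
      field_simp
    · rw [Matrix.smul_apply, Matrix.charmatrix_apply_ne _ _ _ h, Matrix.of_apply, if_neg h,
        Matrix.smul_apply, smul_eq_mul, smul_eq_mul, zero_sub, mul_neg, ← Polynomial.C_mul]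
      congr 2
      field_simp
  rw [hmat, Matrix.det_smul, Matrix.charpoly, Fintype.card_fin, ← Polynomial.C_pow]


lemma Ea_det (B0 B1 B2 : Matrix (Fin m) (Fin m) ℝ) (a : ℝ) :
    (Polynomial.mapRingHom (Polynomial.evalRingHom a))
      ((Matrix.of fun i j => (if i = j then Polynomial.C (1 - Polynomial.X^2) * Polynomial.X
          else 0)
        - Polynomial.C (Polynomial.C (B0 i j) + Polynomial.C (B1 i j) * Polynomial.X
            + Polynomial.C (B2 i j) * Polynomial.X^2)).det)
    = (Matrix.of fun i j => (if i = j then Polynomial.C (1 - a^2) * Polynomial.X else 0)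
        - Polynomial.C ((B0 + a • B1 + a^2 • B2) i j)).det := by
  rw [RingHom.map_det]
  congr 1
  ext i j
  rw [RingHom.mapMatrix_apply, Matrix.map_apply, Matrix.of_apply, Matrix.of_apply, map_sub]
  have h2 : (Polynomial.mapRingHom (Polynomial.evalRingHom a))
      (Polynomial.C (Polynomial.C (B0 i j) + Polynomial.C (B1 i j) * Polynomial.X
        + Polynomial.C (B2 i j) * Polynomial.X^2))
      = Polynomial.C ((B0 + a • B1 + a^2 • B2) i j) := by
    rw [Polynomial.coe_mapRingHom, Polynomial.map_C]
    congr 1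
    simp only [Polynomial.coe_evalRingHom, Polynomial.eval_add, Polynomial.eval_mul,
      Polynomial.eval_C, Polynomial.eval_X, Polynomial.eval_pow, Matrix.add_apply,
      Matrix.smul_apply, smul_eq_mul]
    ring
  rw [h2]
  congr 1
  by_cases h : i = j
  · rw [if_pos h, if_pos h, map_mul, Polynomial.coe_mapRingHom, Polynomial.map_C,
      Polynomial.map_X]
    congr 2
    simp
  · rw [if_neg h, if_neg h, map_zero]

lemma OFam.update_mem (gsymm : ∀ z w, g z w = g w z) {e ε} {s : Finset ℕ}
    (hf : OFam g e ε s) {i₀ : ℕ} (hi₀ : i₀ ∈ s) {w : Fin m → ℝ} {σ' : ℝ}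
    (hσ' : σ' = 1 ∨ σ' = -1) (hw : g w w = σ')
    (horth : ∀ j ∈ s, j ≠ i₀ → g w (e j) = 0) :
    OFam g (Function.update e i₀ w) (Function.update ε i₀ σ') s := by
  have h1 := (hf.subset (Finset.erase_subset i₀ s)).insert_update gsymm
    (Finset.notMem_erase i₀ s) hσ' hw
    (fun i hi => horth i (Finset.mem_of_mem_erase hi) (Finset.ne_of_mem_erase hi))
  rwa [Finset.insert_erase hi₀] at h1

lemma step_key
    (gnd : ∀ z : Fin m → ℝ, (∀ w, g z w = 0) → z = 0)
    (gsymm : ∀ z w, g z w = g w z)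
    {A : (Fin m → ℝ) →ₗ[ℝ] (Fin m → ℝ) →ₗ[ℝ] (Fin m → ℝ) →ₗ[ℝ] (Fin m → ℝ) →ₗ[ℝ] ℝ}
    {J : (Fin m → ℝ) → ((Fin m → ℝ) →ₗ[ℝ] (Fin m → ℝ))}
    (hJ : ∀ x y z, g (J x y) z = A y x x z)
    {k r' : ℕ} {c : Polynomial ℝ}
    (Hprev : ∀ (e : ℕ → Fin m → ℝ) (ε : ℕ → ℝ) (s : Finset ℕ), #s = k → OFam g e ε s →
      nct ε s = r' → (TOp J e ε s).charpoly = c)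
    {e : ℕ → Fin m → ℝ} {ε : ℕ → ℝ} {s : Finset ℕ} (hcard : #s = k) (hf : OFam g e ε s)
    {i₀ : ℕ} (hi₀ : i₀ ∈ s) {v : Fin m → ℝ} (hv : g v v = - ε i₀)
    (hvo : ∀ j ∈ s, g v (e j) = 0)
    (hcount : nct (Function.update ε i₀ (- ε i₀)) s = r') :
    (TOp J e ε s).charpoly = c := by
  classical
  have hσ : ε i₀ = 1 ∨ ε i₀ = -1 := hf.1 i₀ hi₀
  set σ : ℝ := ε i₀ with hσdef
  set Rest := TOp J e ε (s.erase i₀) with hRest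
  set Jc := J (e i₀ + v) - J (e i₀) - J v with hJc
  set bb := Pi.basisFun ℝ (Fin m) with hbb
  set B0 := LinearMap.toMatrix bb bb (σ • J (e i₀) + Rest) with hB0
  set B1 := LinearMap.toMatrix bb bb (σ • Jc) with hB1
  set B2 := LinearMap.toMatrix bb bb (σ • J v - Rest) with hB2
  set Mop : ℝ → ((Fin m → ℝ) →ₗ[ℝ] (Fin m → ℝ)) :=
    fun a => ((σ • J (e i₀) + Rest) + a • (σ • Jc) + a^2 • (σ • J v - Rest)) with hMop
  have hMopMat : ∀ a : ℝ, LinearMap.toMatrix bb bb (Mop a) = B0 + a • B1 + a^2 • B2 := by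
    intro a
    rw [hMop, hB0, hB1, hB2]
    simp only [map_add, LinearEquiv.map_smul]
  have hJline : ∀ a : ℝ, J (e i₀ + a • v) = J (e i₀) + a • Jc + a^2 • J v := by
    intro a
    have h := J_mix gnd hJ (e i₀) v 1 a
    rw [one_smul, one_pow, one_smul, one_mul] at h
    rw [h, hJc]
  have hMopEq : ∀ a : ℝ, (1 - a^2) ≠ 0 →
      (1 - a^2)⁻¹ • Mop a = (σ * (1 - a^2)⁻¹) • J (e i₀ + a • v) + Rest := by
    intro a ha
    rw [hJline a, hMop]
    apply LinearMap.ext; intro y; funext i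
    simp only [LinearMap.add_apply, LinearMap.smul_apply, LinearMap.sub_apply,
      Pi.add_apply, Pi.smul_apply, smul_eq_mul, Pi.sub_apply]
    field_simp
    ring
  have hframe : ∀ a : ℝ, 1 < a →
      ((σ * (1 - a^2)⁻¹) • J (e i₀ + a • v) + Rest).charpoly = c := by
    intro a ha
    have ha2 : (0:ℝ) < a^2 - 1 := by nlinarith
    have ha2ne : a^2 - 1 ≠ 0 := ne_of_gt ha2
    set t := (Real.sqrt (a^2 - 1))⁻¹ with ht
    have hsq : Real.sqrt (a^2-1) * Real.sqrt (a^2-1) = a^2 - 1 := Real.mul_self_sqrt ha2.le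
    have hsqne : Real.sqrt (a^2-1) ≠ 0 := by positivity
    have ht2 : t^2 = (a^2 - 1)⁻¹ := by rw [ht, pow_two, ← mul_inv, hsq]
    set wa := t • (e i₀ + a • v) with hwa
    have hxx : g (e i₀ + a • v) (e i₀ + a • v) = σ * (1 - a^2) := by
      simp only [map_add, LinearMap.add_apply, map_smul, LinearMap.smul_apply, smul_eq_mul]
      rw [hf.2 i₀ hi₀ i₀ hi₀, if_pos rfl, gsymm (e i₀) v, hvo i₀ hi₀, hv]
      ring
    have hww : g wa wa = -σ := by
      rw [hwa]
      simp only [map_smul, LinearMap.smul_apply, smul_eq_mul]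
      rw [hxx, ← mul_assoc, ← pow_two, ht2]
      have hrw : (1 - a^2) = -(a^2 - 1) := by ring
      rw [hrw]
      field_simp
    have hworth : ∀ j ∈ s, j ≠ i₀ → g wa (e j) = 0 := by
      intro j hj hji
      rw [hwa]
      simp only [map_smul, LinearMap.smul_apply, smul_eq_mul, map_add, LinearMap.add_apply]
      rw [hf.2 i₀ hi₀ j hj, if_neg (fun h => hji h.symm), hvo j hj]
      ring
    have hσ' : -σ = 1 ∨ -σ = -1 := by
      rcases hσ with h | h <;> rw [h] <;> norm_num
    have hf' : OFam g (Function.update e i₀ wa) (Function.update ε i₀ (-σ)) s :=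
      hf.update_mem gsymm hi₀ hσ' hww hworth
    have hT := Hprev _ _ s hcard hf' hcount
    rw [TOp_update hi₀, ← hRest] at hT
    have hJwa : (-σ) • J wa = (σ * (1 - a^2)⁻¹) • J (e i₀ + a • v) := by
      rw [hwa, J_smul gnd hJ _ t, smul_smul, ht2]
      congr 1
      have hrw : (1 - a^2) = -(a^2 - 1) := by ring
      rw [hrw, inv_neg]
      ring
    rw [hJwa] at hT
    exact hT
  -- polynomial continuation
  set Dbig : Polynomial (Polynomial ℝ) := (Matrix.of fun i j =>
    (if i = j then Polynomial.C (1 - Polynomial.X^2) * Polynomial.X else 0)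
      - Polynomial.C (Polynomial.C (B0 i j) + Polynomial.C (B1 i j) * Polynomial.X
          + Polynomial.C (B2 i j) * Polynomial.X^2)).det with hDbig
  set Gbig : Polynomial (Polynomial ℝ) :=
    Polynomial.C ((1 - Polynomial.X^2)^m) * c.map (Polynomial.C) with hGbig
  have hEval : ∀ a : ℝ, (1 - a^2) ≠ 0 →
      (Polynomial.mapRingHom (Polynomial.evalRingHom a)) Dbig
        = Polynomial.C ((1-a^2)^m) * ((1 - a^2)⁻¹ • Mop a).charpoly := by
    intro a ha
    rw [hDbig, Ea_det B0 B1 B2 a, ← hMopMat a, det_scale ha, ← LinearEquiv.map_smul,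
      LinearMap.charpoly_toMatrix]
  have hEvalG : ∀ a : ℝ,
      (Polynomial.mapRingHom (Polynomial.evalRingHom a)) Gbig
        = Polynomial.C ((1-a^2)^m) * c := by
    intro a
    rw [hGbig, map_mul, Polynomial.coe_mapRingHom, Polynomial.map_C, Polynomial.map_map]
    have hcomp : (Polynomial.evalRingHom a).comp Polynomial.C = RingHom.id ℝ :=
      RingHom.ext fun r => Polynomial.eval_C
    rw [hcomp, Polynomial.map_id]
    congr 2
    simp
  have hDG : Dbig = Gbig := by
    have hsub : ∀ a : ℝ, 1 < a →
        (Polynomial.mapRingHom (Polynomial.evalRingHom a)) (Dbig - Gbig) = 0 := by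
      intro a ha
      have ha' : (1:ℝ) - a^2 ≠ 0 := by nlinarith
      rw [map_sub, hEval a ha', hEvalG a, hMopEq a ha', hframe a ha, sub_self]
    rw [← sub_eq_zero]
    apply Polynomial.ext
    intro n
    rw [Polynomial.coeff_zero]
    apply Polynomial.eq_zero_of_infinite_isRoot
    apply Set.Infinite.mono ?_ (Set.Ioi_infinite 1)
    intro a ha
    have h := congrArg (fun p => p.coeff n) (hsub a ha)
    simpa [Polynomial.coeff_map] using h
  have h0 := congrArg (Polynomial.mapRingHom (Polynomial.evalRingHom (0:ℝ))) hDG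
  rw [hEval 0 (by norm_num), hEvalG 0] at h0
  have hz : (1:ℝ) - (0:ℝ)^2 = 1 := by norm_num
  rw [hz] at h0
  rw [one_pow, Polynomial.C_1, one_mul, one_mul, inv_one, one_smul] at h0
  have hM0 : Mop 0 = σ • J (e i₀) + Rest := by
    rw [hMop]
    norm_num
  rw [hM0] at h0
  rw [TOp_split hi₀, ← hRest, ← hσdef]
  exact h0


lemma nct_update_mem {ε : ℕ → ℝ} {t : Finset ℕ} {i₀ : ℕ} (hi : i₀ ∈ t) (b : ℝ) :
    nct (Function.update ε i₀ b) t = (if b = -1 then 1 else 0) + nct ε (t.erase i₀) := by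
  conv_lhs => rw [← Finset.insert_erase hi]
  exact ct_insert_update (Finset.notMem_erase i₀ t) (-1) b

lemma nct_split {ε : ℕ → ℝ} {t : Finset ℕ} {i₀ : ℕ} (hi : i₀ ∈ t) :
    nct ε t = (if ε i₀ = -1 then 1 else 0) + nct ε (t.erase i₀) :=
  card_filter_split hi

lemma const_level
    (gnd : ∀ z : Fin m → ℝ, (∀ w, g z w = 0) → z = 0)
    (gsymm : ∀ z w, g z w = g w z)
    {A : (Fin m → ℝ) →ₗ[ℝ] (Fin m → ℝ) →ₗ[ℝ] (Fin m → ℝ) →ₗ[ℝ] (Fin m → ℝ) →ₗ[ℝ] ℝ}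
    {J : (Fin m → ℝ) → ((Fin m → ℝ) →ₗ[ℝ] (Fin m → ℝ))}
    (hJ : ∀ x y z, g (J x y) z = A y x x z)
    {p q k r s : ℕ}
    (negmax : ∃ W : Submodule ℝ (Fin m → ℝ), finrank ℝ W = p ∧ ∀ z ∈ W, z ≠ 0 → g z z < 0)
    (posmax : ∃ W : Submodule ℝ (Fin m → ℝ), finrank ℝ W = q ∧ ∀ z ∈ W, z ≠ 0 → 0 < g z z)
    {c : Polynomial ℝ}
    (hk : r + s = k) (hr : r ≤ p) (hs : s ≤ q)
    (hseed : ∀ (e : ℕ → Fin m → ℝ) (ε : ℕ → ℝ) (t : Finset ℕ), #t = k → OFam g e ε t →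
        nct ε t = r → (TOp J e ε t).charpoly = c) :
    ∀ r' s', r' + s' = k → r' ≤ p → s' ≤ q →
      ∀ (e : ℕ → Fin m → ℝ) (ε : ℕ → ℝ) (t : Finset ℕ), #t = k → OFam g e ε t →
        nct ε t = r' → (TOp J e ε t).charpoly = c := by
  have up : ∀ d, r + d ≤ p → d ≤ s →
      ∀ (e : ℕ → Fin m → ℝ) (ε : ℕ → ℝ) (t : Finset ℕ), #t = k → OFam g e ε t →
        nct ε t = r + d → (TOp J e ε t).charpoly = c := by
    intro d
    induction d with
    | zero =>
      intro _ _ e ε t h1 h2 h3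
      exact hseed e ε t h1 h2 (by omega)
    | succ d ih =>
      intro hdp hds e ε t h1 h2 h3
      obtain ⟨i₀, hi₀, hεi₀⟩ := exists_neg_idx (s := t) (ε := ε) (by omega)
      have hsum := nct_add_pct h2.1
      have hpct : pct ε t < q := by omega
      obtain ⟨v, hv1, hv2⟩ := exists_unit_pos gsymm posmax h2 hpct
      have hcnt : nct (Function.update ε i₀ (- ε i₀)) t = r + d := by
        rw [nct_update_mem hi₀, if_neg (by rw [hεi₀]; norm_num)]
        have := nct_split (ε := ε) hi₀
        rw [if_pos hεi₀] at this
        omega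
      exact step_key gnd gsymm hJ
        (fun e' ε' t' ht' hf' hn' => ih (by omega) (by omega) e' ε' t' ht' hf' hn')
        h1 h2 hi₀ (by rw [hv1, hεi₀]; norm_num) hv2 hcnt
  have down : ∀ d, d ≤ r → s + d ≤ q →
      ∀ (e : ℕ → Fin m → ℝ) (ε : ℕ → ℝ) (t : Finset ℕ), #t = k → OFam g e ε t →
        nct ε t = r - d → (TOp J e ε t).charpoly = c := by
    intro d
    induction d with
    | zero =>
      intro _ _ e ε t h1 h2 h3
      exact hseed e ε t h1 h2 (by omega)
    | succ d ih =>
      intro hdp hds e ε t h1 h2 h3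
      have hsum := nct_add_pct h2.1
      obtain ⟨i₀, hi₀, hεi₀⟩ := exists_pos_idx (s := t) (ε := ε) (by omega)
      have hnct : nct ε t < p := by omega
      obtain ⟨v, hv1, hv2⟩ := exists_unit_neg gsymm negmax h2 hnct
      have hcnt : nct (Function.update ε i₀ (- ε i₀)) t = r - d := by
        rw [nct_update_mem hi₀, if_pos (by rw [hεi₀])]
        have := nct_split (ε := ε) hi₀
        rw [if_neg (by rw [hεi₀]; norm_num)] at this
        omega
      exact step_key gnd gsymm hJ
        (fun e' ε' t' ht' hf' hn' => ih (by omega) (by omega) e' ε' t' ht' hf' hn')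
        h1 h2 hi₀ (by rw [hv1, hεi₀]) hv2 hcnt
  intro r' s' hk' hr' hs' e ε t h1 h2 h3
  by_cases hcase : r ≤ r'
  · exact up (r' - r) (by omega) (by omega) e ε t h1 h2 (by omega)
  · exact down (r - r') (by omega) (by omega) e ε t h1 h2 (by omega)


lemma frame_basis_facts (gsymm : ∀ z w, g z w = g w z) {b : ℕ → Fin m → ℝ} {β : ℕ → ℝ}
    (hb : OFam g b β (range m)) (hm : 0 < m) :
    (∀ u : Fin m → ℝ, u = ∑ i ∈ range m, (β i * g u (b i)) • b i) ∧
    (∀ L : (Fin m → ℝ) →ₗ[ℝ] (Fin m → ℝ), LinearMap.trace ℝ (Fin m → ℝ) L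
        = ∑ i ∈ range m, β i * g (L (b i)) (b i)) := by
  classical
  have hmem : ∀ i : Fin m, (i : ℕ) ∈ range m := fun i => Finset.mem_range.mpr i.isLt
  set bF : Fin m → Fin m → ℝ := fun i => b i.val with hbF
  set βF : Fin m → ℝ := fun i => β i.val with hβF
  have hd : ∀ i, g (bF i) (bF i) = βF i := by
    intro i
    rw [hbF, hβF]
    simp only
    rw [hb.2 _ (hmem i) _ (hmem i), if_pos rfl]
  have ho : ∀ i j, i ≠ j → g (bF i) (bF j) = 0 := by
    intro i j hij
    rw [hb.2 _ (hmem i) _ (hmem j), if_neg (fun h => hij (Fin.val_injective h))]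
  have hpm' : ∀ i, βF i = 1 ∨ βF i = -1 := fun i => hb.1 _ (hmem i)
  have li : LinearIndependent ℝ bF := findep hd ho hpm'
  have hcard : Fintype.card (Fin m) = finrank ℝ (Fin m → ℝ) := by
    rw [Fintype.card_fin, finrank_pi, Fintype.card_fin]
  have : Nonempty (Fin m) := ⟨⟨0, hm⟩⟩
  set B := basisOfLinearIndependentOfCardEqFinrank li hcard with hB
  have hBcoe : ∀ i, B i = bF i := fun i =>
    congrFun (coe_basisOfLinearIndependentOfCardEqFinrank li hcard) i
  have hrepr : ∀ (u : Fin m → ℝ) (i : Fin m), B.repr u i = βF i * g u (bF i) := by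
    intro u i
    have hsum := B.sum_repr u
    have hsum' : ∑ j, B.repr u j • bF j = u := by
      conv_rhs => rw [← hsum]
      exact Finset.sum_congr rfl fun j _ => by rw [hBcoe j]
    have hpair : g u (bF i) = B.repr u i * βF i := by
      conv_lhs => rw [← hsum']
      exact gsum hd ho _ i
    rw [hpair]
    rcases hpm' i with h1 | h1 <;> rw [h1] <;> ring
  constructor
  · intro u
    have hspan : Submodule.span ℝ (Set.range bF) = ⊤ := by
      rw [← B.span_eq]
      congr 1
      rw [coe_basisOfLinearIndependentOfCardEqFinrank]
    have hu : u ∈ Submodule.span ℝ (Set.range bF) := by rw [hspan]; trivial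
    have hexp := expandCoeff hd ho hpm' hu
    rw [Finset.sum_range (fun i => (β i * g u (b i)) • b i)]
    exact hexp
  · intro L
    rw [LinearMap.trace_eq_matrix_trace ℝ B L, Matrix.trace]
    rw [Finset.sum_range (fun i => β i * g (L (b i)) (b i))]
    apply Finset.sum_congr rfl
    intro i _
    rw [Matrix.diag]
    rw [LinearMap.toMatrix_apply, hBcoe i, hrepr]

lemma gTOp {J : (Fin m → ℝ) → ((Fin m → ℝ) →ₗ[ℝ] (Fin m → ℝ))}
    {A : (Fin m → ℝ) →ₗ[ℝ] (Fin m → ℝ) →ₗ[ℝ] (Fin m → ℝ) →ₗ[ℝ] (Fin m → ℝ) →ₗ[ℝ] ℝ}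
    (hJ : ∀ x y z, g (J x y) z = A y x x z) (e : ℕ → Fin m → ℝ) (ε : ℕ → ℝ) (t : Finset ℕ)
    (y w : Fin m → ℝ) :
    g ((TOp J e ε t) y) w = ∑ i ∈ t, ε i * A y (e i) (e i) w := by
  unfold TOp
  rw [LinearMap.sum_apply, map_sum, LinearMap.sum_apply]
  apply Finset.sum_congr rfl
  intro i _
  rw [LinearMap.smul_apply, map_smul, LinearMap.smul_apply, smul_eq_mul, hJ]

lemma claimA (gnd : ∀ z : Fin m → ℝ, (∀ w, g z w = 0) → z = 0)
    (gsymm : ∀ z w, g z w = g w z)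
    {A : (Fin m → ℝ) →ₗ[ℝ] (Fin m → ℝ) →ₗ[ℝ] (Fin m → ℝ) →ₗ[ℝ] (Fin m → ℝ) →ₗ[ℝ] ℝ}
    {J : (Fin m → ℝ) → ((Fin m → ℝ) →ₗ[ℝ] (Fin m → ℝ))}
    (hJ : ∀ x y z, g (J x y) z = A y x x z) (hm : 0 < m)
    {b f : ℕ → Fin m → ℝ} {β δ : ℕ → ℝ}
    (hb : OFam g b β (range m)) (hf : OFam g f δ (range m)) :
    TOp J f δ (range m) = TOp J b β (range m) := by
  classical
  apply opext gnd
  intro y w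
  rw [gTOp hJ, gTOp hJ]
  have hexpB := (frame_basis_facts gsymm hb hm).1
  have hexpF := (frame_basis_facts gsymm hf hm).1
  have hexp1 : ∀ u x : Fin m → ℝ, A y u x w
      = ∑ j ∈ range m, (β j * g u (b j)) * A y (b j) x w := by
    intro u x
    conv_lhs => rw [hexpB u]
    rw [map_sum, LinearMap.sum_apply, LinearMap.sum_apply]
    apply Finset.sum_congr rfl
    intro j _
    rw [map_smul, LinearMap.smul_apply, LinearMap.smul_apply, smul_eq_mul]
  have hexp2 : ∀ u x : Fin m → ℝ, A y u x w
      = ∑ i ∈ range m, (δ i * g x (f i)) * A y u (f i) w := by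
    intro u x
    conv_lhs => rw [hexpF x]
    rw [map_sum, LinearMap.sum_apply]
    apply Finset.sum_congr rfl
    intro i _
    rw [map_smul, LinearMap.smul_apply, smul_eq_mul]
  calc ∑ i ∈ range m, δ i * A y (f i) (f i) w
      = ∑ i ∈ range m, ∑ j ∈ range m,
          δ i * ((β j * g (f i) (b j)) * A y (b j) (f i) w) := by
        apply Finset.sum_congr rfl
        intro i _
        rw [hexp1 (f i) (f i), Finset.mul_sum]
    _ = ∑ j ∈ range m, ∑ i ∈ range m,
          δ i * ((β j * g (f i) (b j)) * A y (b j) (f i) w) := Finset.sum_comm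
    _ = ∑ j ∈ range m, β j * A y (b j) (b j) w := by
        apply Finset.sum_congr rfl
        intro j _
        rw [hexp2 (b j) (b j), Finset.mul_sum]
        apply Finset.sum_congr rfl
        intro i _
        rw [gsymm (b j) (f i)]
        ring


lemma nct_mono {ε : ℕ → ℝ} {t t' : Finset ℕ} (h : t ⊆ t') : nct ε t ≤ nct ε t' :=
  Finset.card_le_card (Finset.filter_subset_filter _ h)

lemma pct_mono {ε : ℕ → ℝ} {t t' : Finset ℕ} (h : t ⊆ t') : pct ε t ≤ pct ε t' :=
  Finset.card_le_card (Finset.filter_subset_filter _ h)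

lemma trace_of_charpoly_eq (hm : 0 < m) {L1 L2 : (Fin m → ℝ) →ₗ[ℝ] (Fin m → ℝ)}
    (h : L1.charpoly = L2.charpoly) :
    LinearMap.trace ℝ (Fin m → ℝ) L1 = LinearMap.trace ℝ (Fin m → ℝ) L2 := by
  have : Nonempty (Fin m) := ⟨⟨0, hm⟩⟩
  rw [LinearMap.trace_eq_matrix_trace ℝ (Pi.basisFun ℝ (Fin m)) L1,
    LinearMap.trace_eq_matrix_trace ℝ (Pi.basisFun ℝ (Fin m)) L2,
    Matrix.trace_eq_neg_charpoly_coeff, Matrix.trace_eq_neg_charpoly_coeff,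
    LinearMap.charpoly_toMatrix, LinearMap.charpoly_toMatrix, h]

lemma trace_TOp {J : (Fin m → ℝ) → ((Fin m → ℝ) →ₗ[ℝ] (Fin m → ℝ))}
    (e : ℕ → Fin m → ℝ) (ε : ℕ → ℝ) (t : Finset ℕ) :
    LinearMap.trace ℝ (Fin m → ℝ) (TOp J e ε t)
      = ∑ i ∈ t, ε i * LinearMap.trace ℝ (Fin m → ℝ) (J (e i)) := by
  unfold TOp
  rw [map_sum]
  exact Finset.sum_congr rfl fun i _ => by rw [map_smul, smul_eq_mul]

lemma einstein
    (gnd : ∀ z : Fin m → ℝ, (∀ w, g z w = 0) → z = 0)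
    (gsymm : ∀ z w, g z w = g w z)
    {A : (Fin m → ℝ) →ₗ[ℝ] (Fin m → ℝ) →ₗ[ℝ] (Fin m → ℝ) →ₗ[ℝ] (Fin m → ℝ) →ₗ[ℝ] ℝ}
    (hA1 : ∀ x y z w, A x y z w = - A y x z w)
    (hA2 : ∀ x y z w, A x y z w = A z w x y)
    {J : (Fin m → ℝ) → ((Fin m → ℝ) →ₗ[ℝ] (Fin m → ℝ))}
    (hJ : ∀ x y z, g (J x y) z = A y x x z)
    {p q k : ℕ} (hpq : p + q = m)
    (negmax : ∃ W : Submodule ℝ (Fin m → ℝ), finrank ℝ W = p ∧ ∀ z ∈ W, z ≠ 0 → g z z < 0)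
    (posmax : ∃ W : Submodule ℝ (Fin m → ℝ), finrank ℝ W = q ∧ ∀ z ∈ W, z ≠ 0 → 0 < g z z)
    {c : Polynomial ℝ}
    (hconst : ∀ (e : ℕ → Fin m → ℝ) (ε : ℕ → ℝ) (t : Finset ℕ), #t = k → OFam g e ε t →
        nct ε t ≤ p → pct ε t ≤ q → (TOp J e ε t).charpoly = c)
    (hk1 : 1 ≤ k) (hk2 : k + 1 ≤ m) :
    ∃ lam : ℝ, ∀ (f : ℕ → Fin m → ℝ) (δ : ℕ → ℝ), OFam g f δ (range m) →
      TOp J f δ (range m) = lam • LinearMap.id := by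
  classical
  have hm : 0 < m := by omega
  obtain ⟨b, β, hb, hnb, hpb⟩ := exists_full_frame gsymm hpq negmax posmax
  set tr := LinearMap.trace ℝ (Fin m → ℝ) with htrdef
  have hsubc : ∀ (e : ℕ → Fin m → ℝ) (t : Finset ℕ), t ⊆ range m → #t = k →
      OFam g e β t → (TOp J e β t).charpoly = c := by
    intro e t hsub hcard hfr
    exact hconst e β t hcard hfr (le_trans (nct_mono hsub) (le_of_eq hnb))
      (le_trans (pct_mono hsub) (le_of_eq hpb))
  have hS : ∀ i j : ℕ, i ∈ range m → j ∈ range m → i ≠ j →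
      ∃ S : Finset ℕ, S ⊆ range m ∧ i ∉ S ∧ j ∉ S ∧ #S = k - 1 := by
    intro i j hi hj hij
    have hcard2 : #(((range m).erase i).erase j) = m - 2 := by
      rw [Finset.card_erase_of_mem (Finset.mem_erase.mpr ⟨Ne.symm hij, hj⟩),
        Finset.card_erase_of_mem hi, Finset.card_range]
      omega
    obtain ⟨S, hSsub, hScard⟩ := Finset.exists_subset_card_eq
      (le_trans (by omega : k - 1 ≤ m - 2) (le_of_eq hcard2.symm))
    refine ⟨S, ?_, ?_, ?_, hScard⟩
    · exact hSsub.trans ((Finset.erase_subset _ _).trans (Finset.erase_subset _ _))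
    · intro hiS
      exact (Finset.mem_erase.mp ((Finset.erase_subset _ _) (hSsub hiS))).1 rfl
    · intro hjS
      exact (Finset.mem_erase.mp (hSsub hjS)).1 rfl
  have hrepl : ∀ i j : ℕ, i ∈ range m → j ∈ range m → i ≠ j → ∀ u : Fin m → ℝ,
      g u u = β i → (∀ l ∈ range m, l ≠ i → l ≠ j → g u (b l) = 0) →
      tr (J u) = tr (J (b i)) := by
    intro i j hi hj hij u huu horth
    obtain ⟨S, hSsub, hiS, hjS, hScard⟩ := hS i j hi hj hij
    set t := insert i S with htdef
    have htsub : t ⊆ range m := Finset.insert_subset hi hSsub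
    have htcard : #t = k := by
      rw [htdef, Finset.card_insert_of_notMem hiS, hScard]
      omega
    have hft : OFam g b β t := hb.subset htsub
    have hfu : OFam g (Function.update b i u) (Function.update β i (β i)) t := by
      apply hft.update_mem gsymm (Finset.mem_insert_self i S) (hb.1 i hi) huu
      intro l hl hli
      have hlS : l ∈ S := Finset.mem_of_mem_insert_of_ne hl hli
      exact horth l (htsub hl) hli (fun h => hjS (by rw [← h]; exact hlS))
    rw [Function.update_eq_self] at hfu
    have hc1 := hsubc _ t htsub htcard hfu
    have hc2 := hsubc _ t htsub htcard hft
    have htr := trace_of_charpoly_eq hm (hc1.trans hc2.symm)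
    rw [← htrdef, trace_TOp, trace_TOp] at htr
    have hsplit1 : ∑ l ∈ t, β l * tr (J (Function.update b i u l))
        = β i * tr (J u) + ∑ l ∈ S, β l * tr (J (b l)) := by
      rw [htdef, Finset.sum_insert hiS, Function.update_self]
      congr 1
      apply Finset.sum_congr rfl
      intro l hl
      rw [Function.update_of_ne (fun h => hiS (by rw [← h]; exact hl))]
    have hsplit2 : ∑ l ∈ t, β l * tr (J (b l))
        = β i * tr (J (b i)) + ∑ l ∈ S, β l * tr (J (b l)) := by
      rw [htdef, Finset.sum_insert hiS]
    rw [hsplit1, hsplit2] at htr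
    rcases hb.1 i hi with h1 | h1 <;> rw [h1] at htr <;> linarith
  have hkey : ∀ i ∈ range m, ∀ j ∈ range m, i ≠ j →
      β i * tr (J (b i)) = β j * tr (J (b j)) := by
    intro i hi j hj hij
    obtain ⟨S, hSsub, hiS, hjS, hScard⟩ := hS i j hi hj hij
    have hti : insert i S ⊆ range m := Finset.insert_subset hi hSsub
    have htj : insert j S ⊆ range m := Finset.insert_subset hj hSsub
    have hci := hsubc b (insert i S) hti
      (by rw [Finset.card_insert_of_notMem hiS, hScard]; omega) (hb.subset hti)
    have hcj := hsubc b (insert j S) htj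
      (by rw [Finset.card_insert_of_notMem hjS, hScard]; omega) (hb.subset htj)
    have htr := trace_of_charpoly_eq hm (hci.trans hcj.symm)
    rw [← htrdef, trace_TOp, trace_TOp, Finset.sum_insert hiS, Finset.sum_insert hjS] at htr
    linarith
  set lam := β 0 * tr (J (b 0)) with hlam
  have h0m : (0:ℕ) ∈ range m := Finset.mem_range.mpr hm
  have hTJ : ∀ i ∈ range m, tr (J (b i)) = lam * β i := by
    intro i hi
    have hβi := hb.1 i hi
    rcases eq_or_ne i 0 with rfl | hne
    · rcases hβi with h1 | h1 <;> rw [hlam, h1] <;> ring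
    · have := hkey i hi 0 h0m hne
      rw [hlam, ← this]
      rcases hβi with h1 | h1 <;> rw [h1] <;> ring
  have htrmix : ∀ (x v : Fin m → ℝ) (α γ : ℝ), tr (J (α • x + γ • v))
      = α^2 * tr (J x) + (α*γ) * (tr (J (x+v)) - tr (J x) - tr (J v)) + γ^2 * tr (J v) := by
    intro x v α γ
    rw [J_mix gnd hJ x v α γ]
    rw [map_add, map_add, map_smul, map_smul, map_smul, map_sub, map_sub]
    simp only [smul_eq_mul]
  have hcross : ∀ i ∈ range m, ∀ j ∈ range m, i ≠ j →
      tr (J (b i + b j)) = lam * β i + lam * β j := by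
    intro i hi j hj hij
    have hgij : g (b i) (b j) = 0 := by rw [hb.2 i hi j hj, if_neg hij]
    have hgji : g (b j) (b i) = 0 := by rw [hb.2 j hj i hi, if_neg (Ne.symm hij)]
    have hgii : g (b i) (b i) = β i := by rw [hb.2 i hi i hi, if_pos rfl]
    have hgjj : g (b j) (b j) = β j := by rw [hb.2 j hj j hj, if_pos rfl]
    have horthu : ∀ (α γ : ℝ), ∀ l ∈ range m, l ≠ i → l ≠ j →
        g (α • b i + γ • b j) (b l) = 0 := by
      intro α γ l hl hli hlj
      simp only [map_add, map_smul, LinearMap.add_apply, LinearMap.smul_apply, smul_eq_mul]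
      rw [hb.2 i hi l hl, if_neg (fun h => hli h.symm), hb.2 j hj l hl,
        if_neg (fun h => hlj h.symm)]
      ring
    have hguu : ∀ (α γ : ℝ), g (α • b i + γ • b j) (α • b i + γ • b j)
        = α^2 * β i + γ^2 * β j := by
      intro α γ
      simp only [map_add, map_smul, LinearMap.add_apply, LinearMap.smul_apply, smul_eq_mul]
      rw [hgij, hgji, hgii, hgjj]
      ring
    have hTJi := hTJ i hi
    have hTJj := hTJ j hj
    by_cases hββ : β j = β i
    · set α := (Real.sqrt 2)⁻¹ with hα
      have hα2 : α^2 = 1/2 := by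
        rw [hα, ← Real.sqrt_inv, Real.sq_sqrt (by norm_num)]
        norm_num
      have hαα : α * α = 1/2 := by rw [← pow_two]; exact hα2
      have huu : g (α • b i + α • b j) (α • b i + α • b j) = β i := by
        rw [hguu, hββ, hα2]
        ring
      have hrep := hrepl i j hi hj hij _ huu (horthu α α)
      rw [htrmix (b i) (b j) α α, hα2, hαα, hTJi, hTJj, hββ] at hrep
      rw [hββ]
      linarith
    · have hβj : β j = - β i := by
        rcases hb.1 i hi with h1 | h1 <;> rcases hb.1 j hj with h2 | h2
        · exact absurd (h2.trans h1.symm) hββ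
        · simp [h1, h2]
        · simp [h1, h2]
        · exact absurd (h2.trans h1.symm) hββ
      have h2pos : (0:ℝ) < Real.sqrt 2 := Real.sqrt_pos.mpr (by norm_num)
      have h22 : (Real.sqrt 2)^2 = 2 := Real.sq_sqrt (by norm_num)
      have huu : g (Real.sqrt 2 • b i + (1:ℝ) • b j) (Real.sqrt 2 • b i + (1:ℝ) • b j)
          = β i := by
        rw [hguu, hβj, h22]
        ring
      have hrep := hrepl i j hi hj hij _ huu (horthu (Real.sqrt 2) 1)
      rw [htrmix (b i) (b j) (Real.sqrt 2) 1, h22, hTJi, hTJj, hβj] at hrep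
      have hX : Real.sqrt 2 * tr (J (b i + b j)) = 0 := by nlinarith [hrep]
      rcases mul_eq_zero.mp hX with h | h
      · exact absurd h (ne_of_gt h2pos)
      · rw [h, hβj]; ring
  set Ric := TOp J b β (range m) with hRic
  have htrform := (frame_basis_facts gsymm hb hm).2
  have hexp := (frame_basis_facts gsymm hb hm).1
  have hRu : ∀ u : Fin m → ℝ, g (Ric u) u = tr (J u) := by
    intro u
    rw [hRic, gTOp hJ, htrdef, htrform (J u)]
    apply Finset.sum_congr rfl
    intro i hi
    rw [hJ]
    congr 1
    exact (hA2 (b i) u u (b i)).symm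
  have h34 : ∀ a b' c' d : Fin m → ℝ, A a b' c' d = - A a b' d c' := by
    intro a b' c' d
    rw [hA2 a b' c' d, hA1 c' d a b', hA2 d c' a b']
  have hpairsym : ∀ x u y' : Fin m → ℝ, A x u u y' = A y' u u x := by
    intro x u y'
    rw [hA2 x u u y', h34 u y' x u, hA1 u y' u x, neg_neg]
  have hsymR : ∀ x y' : Fin m → ℝ, g (Ric x) y' = g (Ric y') x := by
    intro x y'
    rw [hRic, gTOp hJ, gTOp hJ]
    apply Finset.sum_congr rfl
    intro i _
    rw [hpairsym x (b i) y']
  have hdiag : ∀ i ∈ range m, g (Ric (b i)) (b i) = lam * β i := by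
    intro i hi
    rw [hRu (b i)]
    exact hTJ i hi
  have hoff : ∀ i ∈ range m, ∀ j ∈ range m, i ≠ j → g (Ric (b i)) (b j) = 0 := by
    intro i hi j hj hij
    have h1 := hRu (b i + b j)
    rw [hcross i hi j hj hij] at h1
    have hexpand : g (Ric (b i + b j)) (b i + b j)
        = g (Ric (b i)) (b i) + g (Ric (b i)) (b j) + g (Ric (b j)) (b i)
          + g (Ric (b j)) (b j) := by
      rw [map_add]
      simp only [map_add, LinearMap.add_apply]
      ring
    rw [hexpand, hdiag i hi, hdiag j hj, hsymR (b j) (b i)] at h1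
    linarith
  have hRbw : ∀ i ∈ range m, ∀ w : Fin m → ℝ, g (Ric (b i)) w = lam * g (b i) w := by
    intro i hi w
    conv_lhs => rw [hexp w, gsumS']
    conv_rhs => rw [hexp w, gsumS', Finset.mul_sum]
    apply Finset.sum_congr rfl
    intro j hj
    rcases eq_or_ne j i with rfl | hne
    · rw [hdiag j hj, hb.2 j hj j hj, if_pos rfl]
      ring
    · rw [hoff i hi j hj (Ne.symm hne), hb.2 i hi j hj, if_neg (Ne.symm hne)]
      ring
  have hRfinal : Ric = lam • LinearMap.id := by
    apply opext gnd
    intro y w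
    have hy : g (Ric y) w = lam * g y w := by
      conv_lhs => rw [hexp y]
      conv_rhs => rw [hexp y]
      simp only [map_sum, map_smul, LinearMap.sum_apply, LinearMap.smul_apply, smul_eq_mul,
        Finset.mul_sum]
      apply Finset.sum_congr rfl
      intro i hi
      rw [hRbw i hi]
      ring
    rw [hy, LinearMap.smul_apply, LinearMap.id_apply, map_smul, LinearMap.smul_apply,
      smul_eq_mul]
  refine ⟨lam, ?_⟩
  intro f δ hf
  rw [claimA gnd gsymm hJ hm hb hf, ← hRic, hRfinal]


lemma charpoly_shift (lam : ℝ) (N : Matrix (Fin m) (Fin m) ℝ) :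
    (lam • (1 : Matrix (Fin m) (Fin m) ℝ) - N).charpoly
      = (-1:Polynomial ℝ)^m * N.charpoly.comp (Polynomial.C lam - Polynomial.X) := by
  classical
  set ψ : Polynomial ℝ →+* Polynomial ℝ :=
    Polynomial.eval₂RingHom (Polynomial.C : ℝ →+* Polynomial ℝ)
      (Polynomial.C lam - Polynomial.X) with hψ
  have hcomp : N.charpoly.comp (Polynomial.C lam - Polynomial.X) = ψ N.charpoly := rfl
  have hdet : ψ N.charpoly = ((N.charmatrix).map ψ).det := by
    rw [Matrix.charpoly, RingHom.map_det, RingHom.mapMatrix_apply]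
  have hmat : (N.charmatrix).map ψ = - (lam • (1 : Matrix (Fin m) (Fin m) ℝ) - N).charmatrix := by
    ext i j
    rw [Matrix.map_apply, Matrix.neg_apply]
    by_cases h : i = j
    · subst h
      rw [Matrix.charmatrix_apply_eq, Matrix.charmatrix_apply_eq, map_sub]
      rw [hψ, Polynomial.coe_eval₂RingHom, Polynomial.eval₂_X, Polynomial.eval₂_C]
      rw [Matrix.sub_apply, Matrix.smul_apply, Matrix.one_apply_eq, smul_eq_mul, mul_one,
        Polynomial.C_sub]
      ring
    · rw [Matrix.charmatrix_apply_ne _ _ _ h, Matrix.charmatrix_apply_ne _ _ _ h, map_neg]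
      rw [hψ, Polynomial.coe_eval₂RingHom, Polynomial.eval₂_C]
      rw [Matrix.sub_apply, Matrix.smul_apply, Matrix.one_apply_ne h, smul_eq_mul, mul_zero,
        Polynomial.C_sub, Polynomial.C_0]
      ring
  have hfinal : N.charpoly.comp (Polynomial.C lam - Polynomial.X)
      = (-1:Polynomial ℝ)^m * (lam • (1 : Matrix (Fin m) (Fin m) ℝ) - N).charpoly := by
    rw [hcomp, hdet, hmat, Matrix.det_neg, Fintype.card_fin, Matrix.charpoly]
  rw [hfinal, ← mul_assoc, ← mul_pow]
  norm_num

lemma charpoly_shift_op (lam : ℝ) {L1 L2 : (Fin m → ℝ) →ₗ[ℝ] (Fin m → ℝ)}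
    (h : L1.charpoly = L2.charpoly) :
    (lam • LinearMap.id - L1).charpoly = (lam • LinearMap.id - L2).charpoly := by
  classical
  set bb := Pi.basisFun ℝ (Fin m) with hbb
  have key : ∀ L : (Fin m → ℝ) →ₗ[ℝ] (Fin m → ℝ),
      (lam • LinearMap.id - L).charpoly
        = (-1:Polynomial ℝ)^m * L.charpoly.comp (Polynomial.C lam - Polynomial.X) := by
    intro L
    rw [← LinearMap.charpoly_toMatrix (lam • LinearMap.id - L) bb]
    rw [map_sub, LinearEquiv.map_smul, LinearMap.toMatrix_id]
    rw [charpoly_shift, LinearMap.charpoly_toMatrix]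
  rw [key L1, key L2, h]

lemma sum_orderEmb {M : Type*} [AddCommMonoid M] (t : Finset ℕ) {k : ℕ} (h : #t = k)
    (f : ℕ → M) : ∑ i ∈ t, f i = ∑ i : Fin k, f (t.orderEmbOfFin h i) := by
  classical
  calc ∑ i ∈ t, f i = ∑ x : ↥t, f x.val := (Finset.sum_coe_sort t f).symm
    _ = ∑ i : Fin k, f ((t.orderIsoOfFin h) i).val :=
        (Equiv.sum_comp (t.orderIsoOfFin h).toEquiv (fun x : ↥t => f x.val)).symm
    _ = ∑ i : Fin k, f (t.orderEmbOfFin h i) := by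
        apply Finset.sum_congr rfl
        intro i _
        congr 1

lemma ct_emb {t : Finset ℕ} {k : ℕ} (h : #t = k) (ε : ℕ → ℝ) (cval : ℝ) :
    #(univ.filter fun i : Fin k => ε (t.orderEmbOfFin h i) = cval)
      = #(t.filter fun i => ε i = cval) := by
  rw [Finset.card_filter, Finset.card_filter,
    sum_orderEmb t h (f := fun i => if ε i = cval then 1 else 0)]

lemma ct_ext {n : ℕ} (εF : Fin n → ℝ) (cval : ℝ) :
    #((range n).filter fun i => (if h : i < n then εF ⟨i,h⟩ else 1) = cval)
      = #(univ.filter fun i : Fin n => εF i = cval) := by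
  rw [Finset.card_filter, Finset.card_filter,
    Finset.sum_range (f := fun i => if (if h : i < n then εF ⟨i,h⟩ else 1) = cval then 1 else 0)]
  apply Finset.sum_congr rfl
  intro i _
  simp [i.isLt]

lemma pack_frame
    {J : (Fin m → ℝ) → ((Fin m → ℝ) →ₗ[ℝ] (Fin m → ℝ))} {r s : ℕ}
    (e : ℕ → Fin m → ℝ) (ε : ℕ → ℝ) (t : Finset ℕ) (htc : #t = r + s)
    (hf : OFam g e ε t) (hn : nct ε t = r) :
    ∃ (eF : Fin (r+s) → Fin m → ℝ) (εF : Fin (r+s) → ℝ),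
      HasSignature (fun z w => g z w) (Submodule.span ℝ (Set.range eF)) r s ∧
      IsOrthoBasis (fun z w => g z w) (Submodule.span ℝ (Set.range eF)) eF εF ∧
      (∑ i, εF i • J (eF i)) = TOp J e ε t := by
  classical
  set emb := t.orderEmbOfFin htc with hemb
  set eF : Fin (r+s) → Fin m → ℝ := fun i => e (emb i) with heF
  set εF : Fin (r+s) → ℝ := fun i => ε (emb i) with hεF
  have hmem : ∀ i : Fin (r+s), (emb i : ℕ) ∈ t := fun i => Finset.orderEmbOfFin_mem t htc i
  have hd : ∀ i, g (eF i) (eF i) = εF i := by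
    intro i
    rw [heF, hεF]
    simp only
    rw [hf.2 _ (hmem i) _ (hmem i), if_pos rfl]
  have ho : ∀ i j, i ≠ j → g (eF i) (eF j) = 0 := by
    intro i j hij
    rw [heF]
    simp only
    rw [hf.2 _ (hmem i) _ (hmem j), if_neg (fun hc => hij (emb.injective hc))]
  have hpm : ∀ i, εF i = 1 ∨ εF i = -1 := fun i => hf.1 _ (hmem i)
  have hsig := hasSigOfFam hd ho hpm
  have hcn : #(univ.filter fun i : Fin (r+s) => εF i = -1) = r := by
    rw [hεF]
    rw [ct_emb htc ε (-1)]
    exact hn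
  have hsum := nct_add_pct hf.1
  have hcp : #(univ.filter fun i : Fin (r+s) => εF i = 1) = s := by
    rw [hεF, ct_emb htc ε 1]
    have : pct ε t = #(t.filter fun i => ε i = 1) := rfl
    omega
  rw [hcn, hcp] at hsig
  refine ⟨eF, εF, hsig, ⟨rfl, hpm, ?_⟩, ?_⟩
  · intro i j
    show g (eF i) (eF j) = if i = j then εF i else 0
    rcases eq_or_ne i j with rfl | hij
    · rw [hd, if_pos rfl]
    · rw [ho i j hij, if_neg hij]
  · rw [TOp, sum_orderEmb t htc (f := fun i => ε i • J (e i))]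

lemma seed_const
    (gnd : ∀ z : Fin m → ℝ, (∀ w, g z w = 0) → z = 0)
    (gsymm : ∀ z w, g z w = g w z)
    {J : (Fin m → ℝ) → ((Fin m → ℝ) →ₗ[ℝ] (Fin m → ℝ))}
    {p q r s : ℕ} (hpq : p + q = m)
    (negmax : ∃ W : Submodule ℝ (Fin m → ℝ), finrank ℝ W = p ∧ ∀ z ∈ W, z ≠ 0 → g z z < 0)
    (posmax : ∃ W : Submodule ℝ (Fin m → ℝ), finrank ℝ W = q ∧ ∀ z ∈ W, z ≠ 0 → 0 < g z z)
    (hr : r ≤ p) (hs : s ≤ q)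
    (hOss : ∀ (π π' : Submodule ℝ (Fin m → ℝ)) (e e' : Fin (r + s) → (Fin m → ℝ))
      (ε ε' : Fin (r + s) → ℝ),
      HasSignature (fun z w => g z w) π r s → IsOrthoBasis (fun z w => g z w) π e ε →
      HasSignature (fun z w => g z w) π' r s → IsOrthoBasis (fun z w => g z w) π' e' ε' →
      (∑ i, ε i • J (e i)).charpoly = (∑ i, ε' i • J (e' i)).charpoly) :
    ∃ c : Polynomial ℝ, ∀ (e : ℕ → Fin m → ℝ) (ε : ℕ → ℝ) (t : Finset ℕ),
      Finset.card t = r + s → OFam g e ε t → nct ε t = r → (TOp J e ε t).charpoly = c := by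
  obtain ⟨e₀, ε₀, t₀, _, ht₀card, hf₀, hn₀, hp₀⟩ :=
    exists_subframe gsymm hpq negmax posmax hr hs
  refine ⟨(TOp J e₀ ε₀ t₀).charpoly, ?_⟩
  intro e ε t htc hf hn
  obtain ⟨eF, εF, h1, h2, h3⟩ := pack_frame (J := J) e ε t htc hf hn
  obtain ⟨eF₀, εF₀, h1₀, h2₀, h3₀⟩ := pack_frame (J := J) e₀ ε₀ t₀ ht₀card hf₀ hn₀
  rw [← h3, ← h3₀]
  exact hOss _ _ _ _ _ _ h1 h2 h1₀ h2₀

lemma nct_congr {ε ε' : ℕ → ℝ} {t : Finset ℕ} (h : ∀ i ∈ t, ε i = ε' i) :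
    nct ε t = nct ε' t := by
  unfold nct
  congr 1
  exact Finset.filter_congr fun i hi => by rw [h i hi]

lemma pct_congr {ε ε' : ℕ → ℝ} {t : Finset ℕ} (h : ∀ i ∈ t, ε i = ε' i) :
    pct ε t = pct ε' t := by
  unfold pct
  congr 1
  exact Finset.filter_congr fun i hi => by rw [h i hi]

end Core
end St18

open St18 Finset

/-- (Algebraic form of Theorem 1.1(1).) Let `V = ℝ^m` carry a nondegenerate
symmetric bilinear form `g` of signature `(p,q)` and let `A` be an algebraic curvature tensor
with Jacobi operator `J`. If `(r,s)` is admissible and the characteristic polynomial of the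
higher order Jacobi operator `J(π) = Σ εᵢ J(eᵢ)` is the same for all `π ∈ Gr_{r,s}(V)`, then
for every admissible `(r̄,s̄)` with `r̄+s̄ = r+s` or `r̄+s̄ = m-(r+s)` the characteristic
polynomial of `J(π)` is the same for all `π ∈ Gr_{r̄,s̄}(V)`. -/
theorem stmt18 (m p q : ℕ) (hpq : p + q = m)
    (g : (Fin m → ℝ) →ₗ[ℝ] (Fin m → ℝ) →ₗ[ℝ] ℝ)
    (gsymm : ∀ z w, g z w = g w z)
    (gsig : HasSignature (fun z w => g z w) (⊤ : Submodule ℝ (Fin m → ℝ)) p q)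
    (A : (Fin m → ℝ) →ₗ[ℝ] (Fin m → ℝ) →ₗ[ℝ] (Fin m → ℝ) →ₗ[ℝ] (Fin m → ℝ) →ₗ[ℝ] ℝ)
    (hA1 : ∀ x y z w, A x y z w = - A y x z w)
    (hA2 : ∀ x y z w, A x y z w = A z w x y)
    (hA3 : ∀ x y z w, A x y z w + A y z x w + A z x y w = 0)
    (J : (Fin m → ℝ) → ((Fin m → ℝ) →ₗ[ℝ] (Fin m → ℝ)))
    (hJ : ∀ x y z, g (J x y) z = A y x x z)
    (r s : ℕ) (hr : r ≤ p) (hs : s ≤ q) (hrs1 : 1 ≤ r + s) (hrs2 : r + s ≤ m - 1)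
    (hOss : ∀ (π π' : Submodule ℝ (Fin m → ℝ)) (e e' : Fin (r + s) → (Fin m → ℝ))
      (ε ε' : Fin (r + s) → ℝ),
      HasSignature (fun z w => g z w) π r s → IsOrthoBasis (fun z w => g z w) π e ε →
      HasSignature (fun z w => g z w) π' r s → IsOrthoBasis (fun z w => g z w) π' e' ε' →
      (∑ i, ε i • J (e i)).charpoly = (∑ i, ε' i • J (e' i)).charpoly) :
    ∀ rb sb : ℕ, rb ≤ p → sb ≤ q → 1 ≤ rb + sb → rb + sb ≤ m - 1 →
      (rb + sb = r + s ∨ rb + sb = m - (r + s)) →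
      ∀ (π π' : Submodule ℝ (Fin m → ℝ)) (e e' : Fin (rb + sb) → (Fin m → ℝ))
        (ε ε' : Fin (rb + sb) → ℝ),
        HasSignature (fun z w => g z w) π rb sb → IsOrthoBasis (fun z w => g z w) π e ε →
        HasSignature (fun z w => g z w) π' rb sb →
        IsOrthoBasis (fun z w => g z w) π' e' ε' →
        (∑ i, ε i • J (e i)).charpoly = (∑ i, ε' i • J (e' i)).charpoly := by
  classical
  intro rb sb hrb hsb hK1 hK2 hdis π π' e e' ε ε' hsig hob hsig' hob'
  have hm2 : 2 ≤ m := by omega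
  have hm : 0 < m := by omega
  have gnd : ∀ z : Fin m → ℝ, (∀ w, g z w = 0) → z = 0 :=
    fun z h => gsig.1 z trivial (fun w _ => h w)
  have negmax : ∃ W : Submodule ℝ (Fin m → ℝ), Module.finrank ℝ W = p ∧
      ∀ z ∈ W, z ≠ 0 → g z z < 0 := by
    obtain ⟨W, _, h2, h3⟩ := gsig.2.1
    exact ⟨W, h2, h3⟩
  have posmax : ∃ W : Submodule ℝ (Fin m → ℝ), Module.finrank ℝ W = q ∧
      ∀ z ∈ W, z ≠ 0 → 0 < g z z := by
    obtain ⟨W, _, h2, h3⟩ := gsig.2.2.2.1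
    exact ⟨W, h2, h3⟩
  obtain ⟨c, hcseed⟩ := seed_const gnd gsymm hpq negmax posmax hr hs hOss
  have hCall : ∀ (e1 : ℕ → Fin m → ℝ) (ε1 : ℕ → ℝ) (t : Finset ℕ), #t = r + s →
      OFam g e1 ε1 t → nct ε1 t ≤ p → pct ε1 t ≤ q → (TOp J e1 ε1 t).charpoly = c := by
    intro e1 ε1 t h1 h2 h3 h4
    have hsum := nct_add_pct h2.1
    exact const_level gnd gsymm hJ negmax posmax rfl hr hs hcseed
      (nct ε1 t) (pct ε1 t) (by omega) h3 h4 e1 ε1 t h1 h2 rfl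
  have unpack : ∀ (π0 : Submodule ℝ (Fin m → ℝ)) (e0 : Fin (rb+sb) → Fin m → ℝ)
      (ε0 : Fin (rb+sb) → ℝ), HasSignature (fun z w => g z w) π0 rb sb →
      IsOrthoBasis (fun z w => g z w) π0 e0 ε0 →
      ∃ (eN : ℕ → Fin m → ℝ) (εN : ℕ → ℝ), OFam g eN εN (range (rb+sb)) ∧
        nct εN (range (rb+sb)) = rb ∧ pct εN (range (rb+sb)) = sb ∧
        TOp J eN εN (range (rb+sb)) = ∑ i, ε0 i • J (e0 i) := by
    intro π0 e0 ε0 hsig0 hob0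
    have hgram : ∀ i' j', g (e0 i') (e0 j') = if i' = j' then ε0 i' else 0 := hob0.2.2
    have hpm0 : ∀ i', ε0 i' = 1 ∨ ε0 i' = -1 := hob0.2.1
    set eN : ℕ → Fin m → ℝ := fun i => if h : i < rb + sb then e0 ⟨i,h⟩ else 0 with heN
    set εN : ℕ → ℝ := fun i => if h : i < rb + sb then ε0 ⟨i,h⟩ else 1 with hεN
    have hfN : OFam g eN εN (range (rb+sb)) := by
      constructor
      · intro i hi
        have hi' := Finset.mem_range.mp hi
        rw [hεN]
        simp only [dif_pos hi']
        exact hpm0 ⟨i, hi'⟩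
      · intro i hi j hj
        have hi' := Finset.mem_range.mp hi
        have hj' := Finset.mem_range.mp hj
        rw [heN, hεN]
        simp only [dif_pos hi', dif_pos hj']
        rw [hgram ⟨i, hi'⟩ ⟨j, hj'⟩]
        by_cases h : i = j
        · subst h
          rw [if_pos rfl, if_pos rfl]
        · rw [if_neg (fun hc => h (congrArg Fin.val hc)), if_neg h]
    have hd0 : ∀ i', g (e0 i') (e0 i') = ε0 i' := fun i' => by rw [hgram, if_pos rfl]
    have ho0 : ∀ i' j', i' ≠ j' → g (e0 i') (e0 j') = 0 := fun i' j' hij => by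
      rw [hgram, if_neg hij]
    have hsig2 : HasSignature (fun z w => g z w) (Submodule.span ℝ (Set.range e0)) rb sb := by
      rw [hob0.1]
      exact hsig0
    have hcounts := countsOfSig hd0 ho0 hpm0 (by rw [Fintype.card_fin]) hsig2
    have hcn : nct εN (range (rb+sb)) = rb := by
      rw [hεN]
      rw [show nct (fun i => if h : i < rb + sb then ε0 ⟨i,h⟩ else 1) (range (rb+sb))
        = #((range (rb+sb)).filter fun i =>
            (if h : i < rb + sb then ε0 ⟨i,h⟩ else 1) = -1) from rfl]
      rw [ct_ext ε0 (-1)]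
      exact hcounts.1
    have hcp : pct εN (range (rb+sb)) = sb := by
      rw [hεN]
      rw [show pct (fun i => if h : i < rb + sb then ε0 ⟨i,h⟩ else 1) (range (rb+sb))
        = #((range (rb+sb)).filter fun i =>
            (if h : i < rb + sb then ε0 ⟨i,h⟩ else 1) = 1) from rfl]
      rw [ct_ext ε0 1]
      exact hcounts.2
    refine ⟨eN, εN, hfN, hcn, hcp, ?_⟩
    rw [TOp, Finset.sum_range
      (f := fun i => εN i • J (eN i))]
    apply Finset.sum_congr rfl
    intro i _
    rw [heN, hεN]
    simp [i.isLt]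
  obtain ⟨eN, εN, hfN, hnN, hpN, hTN⟩ := unpack π e ε hsig hob
  obtain ⟨eN', εN', hfN', hnN', hpN', hTN'⟩ := unpack π' e' ε' hsig' hob'
  rw [← hTN, ← hTN']
  rcases hdis with hcase | hcase
  · rw [hCall eN εN _ (by rw [Finset.card_range]; exact hcase) hfN (by omega) (by omega),
      hCall eN' εN' _ (by rw [Finset.card_range]; exact hcase) hfN' (by omega) (by omega)]
  · have hkk : r + s + 1 ≤ m := by omega
    obtain ⟨lam, hfull⟩ := einstein gnd gsymm hA1 hA2 hJ hpq negmax posmax hCall hrs1 hkk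
    have hdual : ∀ (eD : ℕ → Fin m → ℝ) (εD : ℕ → ℝ), OFam g eD εD (range (rb+sb)) →
        nct εD (range (rb+sb)) = rb → pct εD (range (rb+sb)) = sb →
        ∃ L : (Fin m → ℝ) →ₗ[ℝ] (Fin m → ℝ), L.charpoly = c ∧
          TOp J eD εD (range (rb+sb)) = lam • LinearMap.id - L := by
      intro eD εD hfD hnD hpD
      have hKsub : range (rb+sb) ⊆ range m := Finset.range_subset_range.mpr (by omega)
      obtain ⟨E, Ξ, hEf, hEn, hEp, hEe, hEε⟩ := extend_full gsymm hpq negmax posmax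
        (m - (rb+sb)) (range (rb+sb)) eD εD (by rw [Finset.card_range]; omega) hKsub hfD
        (by omega) (by omega)
      have hunion : range (rb+sb) ∪ (range m \ range (rb+sb)) = range m :=
        Finset.union_sdiff_of_subset hKsub
      have hdisj : Disjoint (range (rb+sb)) (range m \ range (rb+sb)) :=
        Finset.disjoint_sdiff
      have hsplit : TOp J E Ξ (range m)
          = TOp J E Ξ (range (rb+sb)) + TOp J E Ξ (range m \ range (rb+sb)) := by
        conv_lhs => rw [← hunion]
        exact TOp_union hdisj
      have hfull' := hfull E Ξ hEf
      have hTagree : TOp J E Ξ (range (rb+sb)) = TOp J eD εD (range (rb+sb)) :=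
        TOp_congr hEe hEε
      have hnagree : nct Ξ (range (rb+sb)) = rb := by
        rw [nct_congr (fun i hi => (hEε i hi).symm)] at hnD
        exact hnD
      have hpagree : pct Ξ (range (rb+sb)) = sb := by
        rw [pct_congr (fun i hi => (hEε i hi).symm)] at hpD
        exact hpD
      have hcount_split_n := nct_union (ε := Ξ) hdisj
      have hcount_split_p := pct_union (ε := Ξ) hdisj
      rw [hunion] at hcount_split_n hcount_split_p
      refine ⟨TOp J E Ξ (range m \ range (rb+sb)), ?_, ?_⟩
      · apply hCall
        · rw [Finset.card_sdiff_of_subset hKsub, Finset.card_range, Finset.card_range]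
          omega
        · exact hEf.subset Finset.sdiff_subset
        · omega
        · omega
      · rw [← hTagree]
        apply eq_sub_of_add_eq
        rw [← hsplit]
        exact hfull'
    obtain ⟨L1, hL1c, hL1⟩ := hdual eN εN hfN hnN hpN
    obtain ⟨L2, hL2c, hL2⟩ := hdual eN' εN' hfN' hnN' hpN'
    rw [hL1, hL2]
    exact charpoly_shift_op lam (hL1c.trans hL2c.symm)
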